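/- arXiv:2503.03253 — 4 statements merged into one kernel-verified Lean document; each statement's English description precedes it below -/
import Mathlib

section
/- Let T > 0 and let f, a : [0,T] → ℝ be continuous with f(0) ≥ a(0). Define ℓ(t) := sup_{s∈[0,t]} max(a(s) − f(s), 0) and g(t) := f(t) + ℓ(t). Then (g, ℓ) solves the dynamic Skorokhod problem DSP(f,a); that is: ℓ is continuous and nondecreasing with ℓ(0) = 0; g(t) ≥ a(t) for all t ∈ [0,T]; and the Lebesgue–Stieltjes measure associated with ℓ assigns zero mass to the set {t ∈ [0,T] : g(t) > a(t)}. -/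
open Set MeasureTheory

/-- Let `T > 0` and `f, a : [0,T] → ℝ` continuous with `f 0 ≥ a 0`.
With `ℓ t = sup_{s ∈ [0,t]} max (a s - f s) 0` and `g = f + ℓ`, the pair `(g, ℓ)` solves
the dynamic Skorokhod problem `DSP(f, a)`: `ℓ` is continuous and nondecreasing on `[0,T]`
with `ℓ 0 = 0`; `g ≥ a` on `[0,T]`; and the Lebesgue–Stieltjes measure of `ℓ` (encoded by
any Stieltjes function agreeing with the clamped extension of `ℓ`) gives zero mass to
`{t ∈ [0,T] | g t > a t}`. -/
theorem stmt0 (T : ℝ) (hT : 0 < T) (f a : ℝ → ℝ)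
    (hf : ContinuousOn f (Set.Icc 0 T)) (ha : ContinuousOn a (Set.Icc 0 T))
    (h0 : a 0 ≤ f 0)
    (ℓ g : ℝ → ℝ)
    (hℓ : ∀ t, ℓ t = sSup ((fun s => max (a s - f s) 0) '' Set.Icc 0 t))
    (hg : ∀ t, g t = f t + ℓ t) :
    (ContinuousOn ℓ (Set.Icc 0 T) ∧ MonotoneOn ℓ (Set.Icc 0 T) ∧ ℓ 0 = 0) ∧
    (∀ t ∈ Set.Icc 0 T, a t ≤ g t) ∧
    (∀ L : StieltjesFunction ℝ, (∀ t, L t = ℓ (min t T)) →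
      L.measure {t ∈ Set.Icc 0 T | a t < g t} = 0) := by
  set h : ℝ → ℝ := fun s => max (a s - f s) 0 with hhdef
  have hcont : ContinuousOn h (Icc 0 T) := (ha.sub hf).sup continuousOn_const
  have hbddT : BddAbove (h '' Icc 0 T) :=
    (isCompact_Icc.image_of_continuousOn hcont).bddAbove
  have hbdd : ∀ s t : ℝ, 0 ≤ s → t ≤ T → BddAbove (h '' Icc s t) :=
    fun s t hs ht => hbddT.mono (image_mono (Icc_subset_Icc hs ht))
  have hne : ∀ t : ℝ, 0 ≤ t → (h '' Icc 0 t).Nonempty :=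
    fun t ht => ⟨h 0, mem_image_of_mem _ ⟨le_refl _, ht⟩⟩
  have hnn0 : ∀ u : ℝ, 0 ≤ h u := fun u => le_max_right _ _
  have hh0 : h 0 = 0 := max_eq_right (by linarith)
  have hlesup : ∀ t ∈ Icc (0:ℝ) T, h t ≤ ℓ t := by
    intro t ht
    rw [hℓ]
    exact le_csSup (hbdd 0 t le_rfl ht.2) (mem_image_of_mem _ ⟨ht.1, le_refl _⟩)
  have hnn : ∀ t ∈ Icc (0:ℝ) T, 0 ≤ ℓ t := by
    intro t ht
    rw [hℓ]
    calc (0:ℝ) = h 0 := hh0.symm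
      _ ≤ _ := le_csSup (hbdd 0 t le_rfl ht.2) (mem_image_of_mem _ ⟨le_refl _, ht.1⟩)
  have hmono : MonotoneOn ℓ (Icc 0 T) := by
    intro s hs t ht hst
    rw [hℓ, hℓ]
    exact csSup_le_csSup (hbdd 0 t le_rfl ht.2) (hne s hs.1)
      (image_mono (Icc_subset_Icc le_rfl hst))
  have hℓ0 : ℓ 0 = 0 := by
    rw [hℓ, Icc_self, image_singleton, csSup_singleton, hh0]
  have hsplit : ∀ s t : ℝ, 0 ≤ s → s ≤ t → t ≤ T →
      ℓ t = max (ℓ s) (sSup (h '' Icc s t)) := by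
    intro s t hs hst htT
    rw [hℓ t, hℓ s,
      ← csSup_union (hbdd 0 s le_rfl (hst.trans htT)) (hne s hs) (hbdd s t hs htT)
        ⟨h s, mem_image_of_mem _ ⟨le_rfl, hst⟩⟩,
      ← image_union, Icc_union_Icc_eq_Icc hs hst]
  -- continuity of ℓ
  have hcontℓ : ContinuousOn ℓ (Icc 0 T) := by
    rw [Metric.continuousOn_iff]
    intro t ht ε hε
    obtain ⟨δ, hδpos, hδ⟩ := Metric.uniformContinuousOn_iff.mp
      (isCompact_Icc.uniformContinuousOn_of_continuous hcont) (ε/2) (by linarith)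
    refine ⟨δ, hδpos, ?_⟩
    intro u hu hdist
    have key : ∀ p q : ℝ, p ∈ Icc (0:ℝ) T → q ∈ Icc (0:ℝ) T → p ≤ q →
        dist q p < δ → ℓ q ≤ ℓ p + ε/2 := by
      intro p q hp hq hpq hd
      rw [hsplit p q hp.1 hpq hq.2]
      refine max_le (by linarith) ?_
      refine csSup_le ⟨h p, mem_image_of_mem _ ⟨le_rfl, hpq⟩⟩ ?_
      rintro x ⟨u', hu', rfl⟩
      have hu'T : u' ∈ Icc (0:ℝ) T := ⟨hp.1.trans hu'.1, hu'.2.trans hq.2⟩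
      have hdu : dist u' p < δ := by
        rw [Real.dist_eq] at hd ⊢
        rw [abs_of_nonneg (by linarith [hu'.1])]
        rw [abs_of_nonneg (by linarith)] at hd
        linarith [hu'.2]
      have := hδ u' hu'T p hp hdu
      rw [Real.dist_eq, abs_lt] at this
      linarith [hlesup p hp]
    rcases le_total u t with h1 | h1
    · have h2 := key u t hu ht h1 (by rwa [dist_comm] at hdist)
      have h3 := hmono hu ht h1
      rw [Real.dist_eq, abs_lt]
      constructor <;> linarith
    · have h2 := key t u ht hu h1 hdist
      have h3 := hmono ht hu h1
      rw [Real.dist_eq, abs_lt]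
      constructor <;> linarith
  have hga : ∀ t ∈ Icc (0:ℝ) T, a t ≤ g t := by
    intro t ht
    have h1 : a t - f t ≤ h t := le_max_left _ _
    have h2 := hlesup t ht
    rw [hg]; linarith
  refine ⟨⟨hcontℓ, hmono, hℓ0⟩, hga, ?_⟩
  intro L hL
  apply measure_null_of_locally_null
  rintro t ⟨ht, hat⟩
  have hlt : a t - f t < ℓ t := by rw [hg] at hat; linarith
  obtain ⟨δ, hδpos, hflat⟩ :
      ∃ δ > 0, ℓ (max (t - δ) 0) = ℓ (min (t + δ) T) := by
    have hs₁mem : ∀ δ : ℝ, 0 ≤ δ → max (t - δ) 0 ∈ Icc (0:ℝ) T :=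
      fun δ hδ => ⟨le_max_right _ _, max_le (by linarith [ht.2]) hT.le⟩
    have hs₂mem : ∀ δ : ℝ, 0 ≤ δ → min (t + δ) T ∈ Icc (0:ℝ) T :=
      fun δ hδ => ⟨le_min (by linarith [ht.1]) hT.le, min_le_right _ _⟩
    have main : ∀ δ : ℝ, 0 < δ →
        (∀ u ∈ Icc (max (t - δ) 0) (min (t + δ) T), h u ≤ ℓ (max (t - δ) 0)) →
        ℓ (max (t - δ) 0) = ℓ (min (t + δ) T) := by
      intro δ hδ hbound
      set s₁ := max (t - δ) 0 with hs₁def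
      set s₂ := min (t + δ) T with hs₂def
      have hs₁ : s₁ ∈ Icc (0:ℝ) T := hs₁mem δ hδ.le
      have hs₂ : s₂ ∈ Icc (0:ℝ) T := hs₂mem δ hδ.le
      have h12 : s₁ ≤ s₂ :=
        (max_le (by linarith) ht.1).trans (le_min (by linarith) ht.2)
      rw [hsplit s₁ s₂ hs₁.1 h12 hs₂.2]
      symm
      rw [max_eq_left]
      refine csSup_le ⟨h s₁, mem_image_of_mem _ ⟨le_rfl, h12⟩⟩ ?_
      rintro x ⟨u, hu, rfl⟩
      exact hbound u hu
    rcases eq_or_lt_of_le (hnn t ht) with hz | hpos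
    · -- ℓ t = 0, so a t < f t near t, h = 0 near t
      have haf : a t - f t < 0 := by rw [← hz] at hlt; linarith
      have hev : ∀ᶠ u in nhdsWithin t (Icc 0 T), a u - f u < 0 :=
        ((ha.sub hf) t ht).eventually_lt_const haf
      obtain ⟨ε, hεpos, hε⟩ := Metric.mem_nhdsWithin_iff.mp hev
      refine ⟨ε/2, by linarith, main (ε/2) (by linarith) ?_⟩
      intro u hu
      have huT : u ∈ Icc (0:ℝ) T :=
        ⟨(le_max_right _ _).trans hu.1, hu.2.trans (min_le_right _ _)⟩
      have hdu : u ∈ Metric.ball t ε := by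
        rw [Metric.mem_ball, Real.dist_eq, abs_lt]
        constructor
        · have := (le_max_left (t - ε/2) 0).trans hu.1; linarith
        · have := hu.2.trans (min_le_left (t + ε/2) T); linarith
      have hu0 : a u - f u < 0 := hε ⟨hdu, huT⟩
      have : h u = 0 := max_eq_right hu0.le
      rw [this]
      exact hnn _ (hs₁mem (ε/2) (by linarith))
    · -- ℓ t > 0, so h t < ℓ t strictly
      have hht : h t < ℓ t := max_lt hlt hpos
      set c := (h t + ℓ t) / 2 with hc
      have hev : ∀ᶠ u in nhdsWithin t (Icc 0 T), h u < c :=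
        (hcont t ht).eventually_lt_const (by rw [hc]; linarith)
      obtain ⟨ε, hεpos, hε⟩ := Metric.mem_nhdsWithin_iff.mp hev
      set δ := ε / 2 with hδdef
      set s₁ := max (t - δ) 0 with hs₁def
      have hs₁ : s₁ ∈ Icc (0:ℝ) T := hs₁mem δ (by positivity)
      have hs₁t : s₁ ≤ t := max_le (by simp only [hδdef]; linarith) ht.1
      have hwin : ∀ u ∈ Icc s₁ (min (t + δ) T), h u < c := by
        intro u hu
        have huT : u ∈ Icc (0:ℝ) T :=
          ⟨(le_max_right _ _).trans hu.1, hu.2.trans (min_le_right _ _)⟩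
        have hdu : u ∈ Metric.ball t ε := by
          rw [Metric.mem_ball, Real.dist_eq, abs_lt]
          constructor
          · have := (le_max_left (t - δ) 0).trans hu.1
            simp only [hδdef] at this ⊢; linarith
          · have := hu.2.trans (min_le_left (t + δ) T)
            simp only [hδdef] at this ⊢; linarith
        exact hε ⟨hdu, huT⟩
      have hℓs₁ : ℓ s₁ = ℓ t := by
        have hsp := hsplit s₁ t hs₁.1 hs₁t ht.2
        have hsup : sSup (h '' Icc s₁ t) ≤ c := by
          refine csSup_le ⟨h s₁, mem_image_of_mem _ ⟨le_rfl, hs₁t⟩⟩ ?_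
          rintro x ⟨u, hu, rfl⟩
          exact (hwin u ⟨hu.1, hu.2.trans (le_min (by simp only [hδdef]; linarith) ht.2)⟩).le
        rcases max_cases (ℓ s₁) (sSup (h '' Icc s₁ t)) with ⟨he, _⟩ | ⟨he, _⟩
        · rw [hsp, he]
        · exfalso
          rw [hsp, he] at hht
          simp only [hc] at hht hsup
          linarith
      refine ⟨δ, by positivity, main δ (by positivity) ?_⟩
      intro u hu
      rw [← hs₁def, hℓs₁]
      have := hwin u hu
      simp only [hc] at this
      linarith [hlesup t ht]
  -- L is constant on [t-δ, t+δ]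
  set s₁ := max (t - δ) 0 with hs₁def
  set s₂ := min (t + δ) T with hs₂def
  have hs₁ : s₁ ∈ Icc (0:ℝ) T := ⟨le_max_right _ _, max_le (by linarith [ht.2]) hT.le⟩
  have hs₂ : s₂ ∈ Icc (0:ℝ) T := ⟨le_min (by linarith [ht.1]) hT.le, min_le_right _ _⟩
  have hLconst : ∀ u ∈ Icc (t - δ) (t + δ), L u = ℓ s₁ := by
    intro u hu
    rw [hL]
    rcases lt_or_ge u 0 with hu0 | hu0
    · have hmin : min u T = u := min_eq_left (by linarith)
      have hu_empty : ℓ u = 0 := by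
        rw [hℓ, Icc_eq_empty (by linarith : ¬ (0:ℝ) ≤ u), image_empty, Real.sSup_empty]
      have hs₁0 : s₁ = 0 := max_eq_right (by linarith [hu.1])
      rw [hmin, hu_empty, hs₁0, hℓ0]
    · have hmem : min u T ∈ Icc s₁ s₂ := by
        constructor
        · exact le_min (max_le (by linarith [hu.1]) hu0) hs₁.2
        · exact min_le_min hu.2 le_rfl
      have hmemT : min u T ∈ Icc (0:ℝ) T := ⟨hs₁.1.trans hmem.1, min_le_right _ _⟩
      have h1 := hmono hs₁ hmemT hmem.1
      have h2 := hmono hmemT hs₂ hmem.2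
      rw [← hflat] at h2
      linarith
  refine ⟨Ioc (t - δ) (t + δ), mem_nhdsWithin_of_mem_nhds
    (Ioc_mem_nhds (by linarith) (by linarith)), ?_⟩
  rw [StieltjesFunction.measure_Ioc,
    hLconst (t + δ) ⟨by linarith, le_rfl⟩, hLconst (t - δ) ⟨le_rfl, by linarith⟩,
    sub_self, ENNReal.ofReal_zero]
end

section
/- Let T > 0 and let f, a : [0,T] → ℝ be continuous with f(0) ≥ a(0). If (g, ℓ) ∈ C([0,T];ℝ)² solves the dynamic Skorokhod problem DSP(f,a), then for every t ∈ [0,T] one has ℓ(t) = sup_{s∈[0,t]} max(a(s) − f(s), 0) and g(t) = f(t) + sup_{s∈[0,t]} max(a(s) − f(s), 0). In particular, the solution to DSP(f,a) is unique. -/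
open Set MeasureTheory

/-- If `(g, ℓ)` solves the dynamic Skorokhod problem `DSP(f, a)`
(with `f, a` continuous on `[0,T]` and `f 0 ≥ a 0`), i.e. `g = f + ℓ` on `[0,T]`,
`ℓ` is continuous nondecreasing with `ℓ 0 = 0`, `g ≥ a` on `[0,T]`, and the
Lebesgue–Stieltjes measure of `ℓ` (encoded by a Stieltjes function `L` agreeing with the
clamped extension of `ℓ`) gives zero mass to `{t ∈ [0,T] | g t > a t}`, then
`ℓ t = sup_{s ∈ [0,t]} max (a s - f s) 0` and `g t = f t + sup_{s ∈ [0,t]} max (a s - f s) 0`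
for every `t ∈ [0,T]`; in particular the solution is unique. -/
theorem stmt1 (T : ℝ) (hT : 0 < T) (f a g ℓ : ℝ → ℝ)
    (hf : ContinuousOn f (Set.Icc 0 T)) (ha : ContinuousOn a (Set.Icc 0 T))
    (h0 : a 0 ≤ f 0)
    (hgc : ContinuousOn g (Set.Icc 0 T)) (hℓc : ContinuousOn ℓ (Set.Icc 0 T))
    (hgf : ∀ t ∈ Set.Icc 0 T, g t = f t + ℓ t)
    (hℓ0 : ℓ 0 = 0) (hℓm : MonotoneOn ℓ (Set.Icc 0 T))
    (hga : ∀ t ∈ Set.Icc 0 T, a t ≤ g t)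
    (L : StieltjesFunction ℝ) (hL : ∀ t, L t = ℓ (min (max t 0) T))
    (hLzero : L.measure {t ∈ Set.Icc 0 T | a t < g t} = 0) :
    ∀ t ∈ Set.Icc 0 T,
      ℓ t = sSup ((fun s => max (a s - f s) 0) '' Set.Icc 0 t) ∧
      g t = f t + sSup ((fun s => max (a s - f s) 0) '' Set.Icc 0 t) := by
  intro t ht
  obtain ⟨ht0, htT⟩ := ht
  have htmem : t ∈ Icc (0:ℝ) T := ⟨ht0, htT⟩
  have hsub : Icc (0:ℝ) t ⊆ Icc 0 T := Icc_subset_Icc le_rfl htT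
  set φ : ℝ → ℝ := fun s => max (a s - f s) 0 with hφ
  have hφc : ContinuousOn φ (Icc 0 t) :=
    ((ha.mono hsub).sub (hf.mono hsub)).sup continuousOn_const
  have h0mem : (0:ℝ) ∈ Icc (0:ℝ) t := left_mem_Icc.2 ht0
  have hKne : (φ '' Icc 0 t).Nonempty := ⟨φ 0, mem_image_of_mem _ h0mem⟩
  have hbdd : BddAbove (φ '' Icc 0 t) :=
    (isCompact_Icc.image_of_continuousOn hφc).bddAbove
  set c := sSup (φ '' Icc 0 t) with hc
  have hmem : ∀ s ∈ Icc (0:ℝ) t, φ s ≤ c := fun s hs =>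
    le_csSup hbdd (mem_image_of_mem _ hs)
  have hc0 : 0 ≤ c := le_trans (le_max_right _ _) (hmem 0 h0mem)
  -- c ≤ ℓ t
  have hle : c ≤ ℓ t := by
    apply csSup_le hKne
    rintro x ⟨s, hs, rfl⟩
    have hs' : s ∈ Icc (0:ℝ) T := hsub hs
    have h1 : a s - f s ≤ ℓ s := by
      have h2 := hga s hs'
      have h3 := hgf s hs'
      linarith
    have h2 : ℓ s ≤ ℓ t := hℓm hs' htmem hs.2
    have h3 : (0:ℝ) ≤ ℓ t := by
      have := hℓm (left_mem_Icc.2 hT.le) htmem ht0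
      simpa [hℓ0] using this
    exact max_le (h1.trans h2) h3
  -- clamping lemma
  have hclamp : ∀ s ∈ Icc (0:ℝ) T, L s = ℓ s := by
    intro s hs
    rw [hL s, max_eq_left hs.1, min_eq_left hs.2]
  -- ℓ t ≤ c
  have hge : ℓ t ≤ c := by
    by_contra hlt
    push_neg at hlt
    set S := Icc (0:ℝ) t ∩ ℓ ⁻¹' Iic c with hS
    have hScl : IsClosed S :=
      (hℓc.mono hsub).preimage_isClosed_of_isClosed isClosed_Icc isClosed_Iic
    have hScomp : IsCompact S :=
      isCompact_Icc.of_isClosed_subset hScl inter_subset_left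
    have hSne : S.Nonempty := ⟨0, h0mem, by simp [hℓ0, hc0]⟩
    set s₀ := sSup S with hs₀
    have hs₀mem : s₀ ∈ S := hScomp.sSup_mem hSne
    have hs₀Icc : s₀ ∈ Icc (0:ℝ) t := hs₀mem.1
    have hs₀le : ℓ s₀ ≤ c := hs₀mem.2
    have hs₀lt : s₀ < t := by
      rcases lt_or_eq_of_le hs₀Icc.2 with h | h
      · exact h
      · exfalso; rw [h] at hs₀le; linarith
    -- Ioc s₀ t ⊆ {s ∈ Icc 0 T | a s < g s}
    have hsubset : Ioc s₀ t ⊆ {s ∈ Icc (0:ℝ) T | a s < g s} := by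
      intro s hs
      have hs0 : (0:ℝ) ≤ s := le_trans hs₀Icc.1 hs.1.le
      have hsIcc : s ∈ Icc (0:ℝ) t := ⟨hs0, hs.2⟩
      have hsT : s ∈ Icc (0:ℝ) T := hsub hsIcc
      have hℓs : c < ℓ s := by
        by_contra hcon
        push_neg at hcon
        have : s ∈ S := ⟨hsIcc, hcon⟩
        have := le_csSup hScomp.bddAbove this
        exact absurd this (not_le.2 hs.1)
      have haf : a s - f s ≤ c := le_trans (le_max_left _ _) (hmem s hsIcc)
      have hgs := hgf s hsT
      exact ⟨hsT, by linarith⟩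
    have hmzero : L.measure (Ioc s₀ t) = 0 :=
      le_antisymm (hLzero ▸ measure_mono hsubset) zero_le
    rw [L.measure_Ioc, hclamp t htmem, hclamp s₀ (hsub hs₀Icc)] at hmzero
    have : ℓ t - ℓ s₀ ≤ 0 := by
      by_contra hcon
      push_neg at hcon
      rw [ENNReal.ofReal_eq_zero] at hmzero
      linarith
    linarith
  have heq : ℓ t = c := le_antisymm hge hle
  exact ⟨heq, by rw [hgf t htmem, heq]⟩
end

section
/- Let T > 0 and, for i = 1, 2, let a_i, f_i : [0,T] → ℝ be continuous with f_i(0) ≥ a_i(0). Then the dynamic Skorokhod map Γ satisfies the Lipschitz estimate sup_{t∈[0,T]} |Γ(a₁,f₁)(t) − Γ(a₂,f₂)(t)| ≤ 2 sup_{t∈[0,T]} |f₁(t) − f₂(t)| + sup_{t∈[0,T]} |a₁(t) − a₂(t)|. -/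
open Set

lemma skorokhod_sup_le (T t : ℝ) (a₁ f₁ a₂ f₂ : ℝ → ℝ)
    (ha₁ : ContinuousOn a₁ (Set.Icc 0 T)) (hf₁ : ContinuousOn f₁ (Set.Icc 0 T))
    (ha₂ : ContinuousOn a₂ (Set.Icc 0 T)) (hf₂ : ContinuousOn f₂ (Set.Icc 0 T))
    (ht : t ∈ Set.Icc 0 T) :
    sSup ((fun s => max (a₁ s - f₁ s) 0) '' Set.Icc 0 t) ≤
      sSup ((fun s => max (a₂ s - f₂ s) 0) '' Set.Icc 0 t)
      + (sSup ((fun s => |f₁ s - f₂ s|) '' Set.Icc 0 T)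
        + sSup ((fun s => |a₁ s - a₂ s|) '' Set.Icc 0 T)) := by
  obtain ⟨ht0, htT⟩ := ht
  have hsub : Set.Icc (0:ℝ) t ⊆ Set.Icc 0 T := Set.Icc_subset_Icc le_rfl htT
  have hne : (Set.Icc (0:ℝ) t).Nonempty := ⟨0, le_rfl, ht0⟩
  have hbdd2 : BddAbove ((fun s => max (a₂ s - f₂ s) 0) '' Set.Icc 0 t) :=
    isCompact_Icc.bddAbove_image
      (((ha₂.mono hsub).sub (hf₂.mono hsub)).sup continuousOn_const)
  have hbddf : BddAbove ((fun s => |f₁ s - f₂ s|) '' Set.Icc 0 T) :=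
    isCompact_Icc.bddAbove_image (hf₁.sub hf₂).abs
  have hbdda : BddAbove ((fun s => |a₁ s - a₂ s|) '' Set.Icc 0 T) :=
    isCompact_Icc.bddAbove_image (ha₁.sub ha₂).abs
  apply csSup_le (hne.image _)
  rintro x ⟨s, hs, rfl⟩
  have h1 : max (a₂ s - f₂ s) 0 ≤ sSup ((fun s => max (a₂ s - f₂ s) 0) '' Set.Icc 0 t) :=
    le_csSup hbdd2 ⟨s, hs, rfl⟩
  have h2 : |f₁ s - f₂ s| ≤ sSup ((fun s => |f₁ s - f₂ s|) '' Set.Icc 0 T) :=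
    le_csSup hbddf ⟨s, hsub hs, rfl⟩
  have h3 : |a₁ s - a₂ s| ≤ sSup ((fun s => |a₁ s - a₂ s|) '' Set.Icc 0 T) :=
    le_csSup hbdda ⟨s, hsub hs, rfl⟩
  have key : max (a₁ s - f₁ s) 0 ≤ max (a₂ s - f₂ s) 0 + (|f₁ s - f₂ s| + |a₁ s - a₂ s|) := by
    rcases abs_cases (f₁ s - f₂ s) with ⟨e1, _⟩ | ⟨e1, _⟩ <;>
    rcases abs_cases (a₁ s - a₂ s) with ⟨e2, _⟩ | ⟨e2, _⟩ <;>
    rcases max_cases (a₁ s - f₁ s) 0 with ⟨e3, _⟩ | ⟨e3, _⟩ <;>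
    rcases max_cases (a₂ s - f₂ s) 0 with ⟨e4, h4⟩ | ⟨e4, h4⟩ <;>
      simp only [e1, e2, e3, e4] at * <;> linarith
  linarith

/-- Lipschitz continuity of the dynamic Skorokhod map
`Γ(a,f)(t) = f t + sup_{s ∈ [0,t]} max (a s - f s) 0`:
for continuous `a_i, f_i` on `[0,T]` with `f_i 0 ≥ a_i 0`,
`sup_{t ∈ [0,T]} |Γ(a₁,f₁) t - Γ(a₂,f₂) t| ≤ 2 sup_{t ∈ [0,T]} |f₁ t - f₂ t|
  + sup_{t ∈ [0,T]} |a₁ t - a₂ t|`. -/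
theorem stmt2 (T : ℝ) (hT : 0 < T) (a₁ f₁ a₂ f₂ : ℝ → ℝ)
    (ha₁ : ContinuousOn a₁ (Set.Icc 0 T)) (hf₁ : ContinuousOn f₁ (Set.Icc 0 T))
    (ha₂ : ContinuousOn a₂ (Set.Icc 0 T)) (hf₂ : ContinuousOn f₂ (Set.Icc 0 T))
    (h01 : a₁ 0 ≤ f₁ 0) (h02 : a₂ 0 ≤ f₂ 0)
    (g₁ g₂ : ℝ → ℝ)
    (hg₁ : ∀ t, g₁ t = f₁ t + sSup ((fun s => max (a₁ s - f₁ s) 0) '' Set.Icc 0 t))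
    (hg₂ : ∀ t, g₂ t = f₂ t + sSup ((fun s => max (a₂ s - f₂ s) 0) '' Set.Icc 0 t)) :
    ∀ t ∈ Set.Icc 0 T,
      |g₁ t - g₂ t| ≤ 2 * sSup ((fun s => |f₁ s - f₂ s|) '' Set.Icc 0 T)
        + sSup ((fun s => |a₁ s - a₂ s|) '' Set.Icc 0 T) := by
  intro t ht
  have hbddf : BddAbove ((fun s => |f₁ s - f₂ s|) '' Set.Icc 0 T) :=
    isCompact_Icc.bddAbove_image (hf₁.sub hf₂).abs
  have hft : |f₁ t - f₂ t| ≤ sSup ((fun s => |f₁ s - f₂ s|) '' Set.Icc 0 T) :=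
    le_csSup hbddf ⟨t, ht, rfl⟩
  have h12 := skorokhod_sup_le T t a₁ f₁ a₂ f₂ ha₁ hf₁ ha₂ hf₂ ht
  have h21 := skorokhod_sup_le T t a₂ f₂ a₁ f₁ ha₂ hf₂ ha₁ hf₁ ht
  have hsymf : ((fun s => |f₂ s - f₁ s|) '' Set.Icc 0 T) =
      ((fun s => |f₁ s - f₂ s|) '' Set.Icc 0 T) := by
    apply Set.image_congr; intro s _; exact abs_sub_comm _ _
  have hsyma : ((fun s => |a₂ s - a₁ s|) '' Set.Icc 0 T) =
      ((fun s => |a₁ s - a₂ s|) '' Set.Icc 0 T) := by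
    apply Set.image_congr; intro s _; exact abs_sub_comm _ _
  rw [hsymf, hsyma] at h21
  rw [hg₁, hg₂]
  rw [abs_le]
  constructor <;> rcases abs_cases (f₁ t - f₂ t) with ⟨e, _⟩ | ⟨e, _⟩ <;> linarith
end

section
/- Let U ⊂ ℝ^l be compact and let (Ω,ℱ,P) be a probability space. Let q₁, q₂ : Ω → 𝒫(U) be measurable maps into the space of Borel probability measures on U (measurable with respect to the Borel σ-algebra of the W_{2,U} topology). Define the mean measures q̄_i(B) := ∫_Ω q_i(ω)(B) P(dω) for Borel B ⊆ U, i = 1,2. Then W_{2,U}(q̄₁, q̄₂)² ≤ ∫_Ω W_{2,U}(q₁(ω), q₂(ω))² P(dω). -/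
open Set MeasureTheory
open ENNReal

/-- The squared 2-Wasserstein "distance" between two measures on `E`, relative to an
explicit squared-cost function `c`: the infimum over all couplings `π` of `μ` and `ν`
of `∫ c(x, y) dπ`. -/
noncomputable def W2sq {E : Type*} [MeasurableSpace E] (c : E → E → ℝ)
    (μ ν : Measure E) : ℝ :=
  sInf {r : ℝ | ∃ π : Measure (E × E),
    π.map Prod.fst = μ ∧ π.map Prod.snd = ν ∧ r = ∫ p, c p.1 p.2 ∂π}

section W2aux

variable {E : Type*} [MeasurableSpace E]

lemma W2sq_le_cost {c : E → E → ℝ} (hc : ∀ x y, 0 ≤ c x y) {μ ν : Measure E}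
    (π : Measure (E × E)) (h1 : π.map Prod.fst = μ) (h2 : π.map Prod.snd = ν) :
    W2sq c μ ν ≤ ∫ p, c p.1 p.2 ∂π := by
  apply csInf_le
  · refine ⟨0, fun r hr => ?_⟩
    obtain ⟨π', -, -, rfl⟩ := hr
    exact integral_nonneg fun p => hc _ _
  · exact ⟨π, h1, h2, rfl⟩

lemma W2sq_nonneg (c : E → E → ℝ) (hc : ∀ x y, 0 ≤ c x y) (μ ν : Measure E) :
    0 ≤ W2sq c μ ν := by
  apply Real.sInf_nonneg
  rintro r ⟨π, -, -, rfl⟩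
  exact integral_nonneg fun p => hc _ _

/-- normalized piece of a measure -/
noncomputable def npc (μ : Measure E) (B : Set E) : Measure E := (μ B)⁻¹ • μ.restrict B

lemma npc_apply (μ : Measure E) {B s : Set E} (hs : MeasurableSet s) :
    npc μ B s = (μ B)⁻¹ * μ (s ∩ B) := by
  rw [npc, Measure.smul_apply, Measure.restrict_apply hs, smul_eq_mul]

lemma ennreal_inv_mul_le_one {a : ℝ≥0∞} : a⁻¹ * a ≤ 1 := by
  rcases eq_or_ne a 0 with rfl | h0
  · simp
  rcases eq_or_ne a ⊤ with rfl | ht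
  · simp [ENNReal.inv_top]
  · rw [ENNReal.inv_mul_cancel h0 ht]

lemma npc_le_one (μ : Measure E) (B s : Set E) : npc μ B s ≤ 1 := by
  rw [npc, Measure.smul_apply, smul_eq_mul]
  calc (μ B)⁻¹ * μ.restrict B s ≤ (μ B)⁻¹ * μ B :=
        mul_le_mul_right (le_trans (measure_mono (subset_univ s))
          (le_of_eq (Measure.restrict_apply_univ B))) _
    _ ≤ 1 := ennreal_inv_mul_le_one

lemma npc_univ_of_pos (μ : Measure E) {B : Set E} (h0 : μ B ≠ 0) (ht : μ B ≠ ⊤) :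
    npc μ B univ = 1 := by
  rw [npc, Measure.smul_apply, smul_eq_mul, Measure.restrict_apply_univ,
    ENNReal.inv_mul_cancel h0 ht]

instance npc.isFiniteMeasure (μ : Measure E) (B : Set E) : IsFiniteMeasure (npc μ B) :=
  ⟨lt_of_le_of_lt (npc_le_one μ B univ) (by norm_num)⟩

lemma measurable_npc_apply {Ω : Type*} [MeasurableSpace Ω] {μ : Ω → Measure E}
    (hμ : Measurable μ) (B : Set E) (hB : MeasurableSet B) :
    Measurable fun ω => npc (μ ω) B := by
  apply Measure.measurable_of_measurable_coe
  intro s hs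
  simp only [npc_apply _ hs]
  exact ((Measure.measurable_coe hB).comp hμ).inv.mul
    ((Measure.measurable_coe (hs.inter hB)).comp hμ)

end W2aux

section LiftPlan

variable {E : Type*} [MeasurableSpace E] {m : ℕ}

/-- lift of a discrete plan to a coupling candidate -/
noncomputable def liftPlan (B : Fin m → Set E) (g : Fin m → Fin m → ℝ≥0∞)
    (μ ν : Measure E) : Measure (E × E) :=
  ∑ ij : Fin m × Fin m, g ij.1 ij.2 • (npc μ (B ij.1)).prod (npc ν (B ij.2))

lemma liftPlan_apply (B : Fin m → Set E) (g : Fin m → Fin m → ℝ≥0∞)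
    (μ ν : Measure E) (s : Set (E × E)) :
    liftPlan B g μ ν s
      = ∑ ij : Fin m × Fin m, g ij.1 ij.2 * ((npc μ (B ij.1)).prod (npc ν (B ij.2))) s := by
  rw [liftPlan, Measure.coe_finset_sum]
  simp [Measure.smul_apply, smul_eq_mul]

/-- splitting a measure along a finite measurable partition -/
lemma measure_eq_sum_partition {μ : Measure E} {B : Fin m → Set E}
    (hBm : ∀ i, MeasurableSet (B i)) (hdisj : Pairwise (Function.onFun Disjoint B))
    (hcov : (⋃ i, B i) = univ) {s : Set E} (hs : MeasurableSet s) :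
    μ s = ∑ i : Fin m, μ (s ∩ B i) := by
  have h : s = ⋃ i, s ∩ B i := by rw [← inter_iUnion, hcov, inter_univ]
  conv_lhs => rw [h]
  rw [measure_iUnion ?_ fun i => hs.inter (hBm i), tsum_fintype]
  intro i j hij
  exact Disjoint.mono inter_subset_right inter_subset_right (hdisj hij)

lemma scaled_npc {μ : Measure E} [IsFiniteMeasure μ] {B s : Set E} (hs : MeasurableSet s) :
    μ B * npc μ B s = μ (s ∩ B) := by
  rw [npc_apply _ hs]
  rcases eq_or_ne (μ B) 0 with h0 | h0
  · rw [h0, zero_mul]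
    exact (measure_mono_null inter_subset_right h0).symm
  · rw [← mul_assoc, ENNReal.mul_inv_cancel h0 (measure_ne_top μ B), one_mul]

lemma liftPlan_map_fst {B : Fin m → Set E} (hBm : ∀ i, MeasurableSet (B i))
    (hdisj : Pairwise (Function.onFun Disjoint B)) (hcov : (⋃ i, B i) = univ)
    {g : Fin m → Fin m → ℝ≥0∞} {μ ν : Measure E} [IsFiniteMeasure μ] [IsFiniteMeasure ν]
    (hrow : ∀ i, ∑ j, g i j = μ (B i)) (hcol : ∀ j, ∑ i, g i j = ν (B j)) :
    (liftPlan B g μ ν).map Prod.fst = μ := by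
  ext s hs
  rw [Measure.map_apply measurable_fst hs, liftPlan_apply, Fintype.sum_prod_type]
  have key : ∀ i j, g i j * ((npc μ (B i)).prod (npc ν (B j))) (Prod.fst ⁻¹' s)
      = g i j * npc μ (B i) s := by
    intro i j
    rw [← prod_univ, Measure.prod_prod]
    rcases eq_or_ne (ν (B j)) 0 with h0 | h0
    · have : g i j = 0 := by
        have := hcol j
        rw [h0] at this
        exact (Finset.sum_eq_zero_iff.mp this) i (Finset.mem_univ i)
      rw [this, zero_mul, zero_mul]
    · rw [npc_univ_of_pos ν h0 (measure_ne_top ν (B j)), mul_one]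
  simp_rw [key]
  have key2 : ∀ i, ∑ j : Fin m, g i j * npc μ (B i) s = μ (s ∩ B i) := by
    intro i
    rw [← Finset.sum_mul, hrow i, scaled_npc hs]
  rw [Finset.sum_congr rfl fun i _ => key2 i]
  exact (measure_eq_sum_partition hBm hdisj hcov hs).symm

end LiftPlan
section LiftPlan2

variable {E : Type*} [MeasurableSpace E] {m : ℕ}

lemma liftPlan_map_snd {B : Fin m → Set E} (hBm : ∀ i, MeasurableSet (B i))
    (hdisj : Pairwise (Function.onFun Disjoint B)) (hcov : (⋃ i, B i) = univ)
    {g : Fin m → Fin m → ℝ≥0∞} {μ ν : Measure E} [IsFiniteMeasure μ] [IsFiniteMeasure ν]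
    (hrow : ∀ i, ∑ j, g i j = μ (B i)) (hcol : ∀ j, ∑ i, g i j = ν (B j)) :
    (liftPlan B g μ ν).map Prod.snd = ν := by
  ext s hs
  rw [Measure.map_apply measurable_snd hs, liftPlan_apply, Fintype.sum_prod_type]
  have key : ∀ i j, g i j * ((npc μ (B i)).prod (npc ν (B j))) (Prod.snd ⁻¹' s)
      = g i j * npc ν (B j) s := by
    intro i j
    rw [← univ_prod, Measure.prod_prod]
    rcases eq_or_ne (μ (B i)) 0 with h0 | h0
    · have : g i j = 0 := by
        have := hrow i
        rw [h0] at this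
        exact (Finset.sum_eq_zero_iff.mp this) j (Finset.mem_univ j)
      rw [this, zero_mul, zero_mul]
    · rw [npc_univ_of_pos μ h0 (measure_ne_top μ (B i)), one_mul]
  simp_rw [key]
  rw [Finset.sum_comm]
  have key2 : ∀ j, ∑ i : Fin m, g i j * npc ν (B j) s = ν (s ∩ B j) := by
    intro j
    rw [← Finset.sum_mul, hcol j, scaled_npc hs]
  rw [Finset.sum_congr rfl fun j _ => key2 j]
  exact (measure_eq_sum_partition hBm hdisj hcov hs).symm

lemma liftPlan_cell_le {B : Fin m → Set E} (hBm : ∀ i, MeasurableSet (B i))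
    (hdisj : Pairwise (Function.onFun Disjoint B))
    (g : Fin m → Fin m → ℝ≥0∞) (μ ν : Measure E) (i j : Fin m) :
    liftPlan B g μ ν (B i ×ˢ B j) ≤ g i j := by
  rw [liftPlan_apply]
  have key : ∀ ij : Fin m × Fin m,
      g ij.1 ij.2 * ((npc μ (B ij.1)).prod (npc ν (B ij.2))) (B i ×ˢ B j)
      ≤ if ij = (i, j) then g i j else 0 := by
    rintro ⟨i', j'⟩
    rw [Measure.prod_prod]
    by_cases hi : i' = i
    · by_cases hj : j' = j
      · subst hi; subst hj
        rw [if_pos rfl]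
        calc g i' j' * (npc μ (B i') (B i') * npc ν (B j') (B j')) ≤ g i' j' * (1 * 1) :=
              mul_le_mul_right (mul_le_mul' (npc_le_one _ _ _) (npc_le_one _ _ _)) _
          _ = g i' j' := by rw [one_mul, mul_one]
      · rw [if_neg (by simp [hj])]
        have hz : npc ν (B j') (B j) = 0 := by
          rw [npc_apply _ (hBm j),
            Set.disjoint_iff_inter_eq_empty.mp (hdisj fun hh => hj hh.symm),
            measure_empty, mul_zero]
        rw [hz, mul_zero, mul_zero]
    · rw [if_neg (by simp [hi])]
      have hz : npc μ (B i') (B i) = 0 := by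
        rw [npc_apply _ (hBm i),
          Set.disjoint_iff_inter_eq_empty.mp (hdisj fun hh => hi hh.symm),
          measure_empty, mul_zero]
      rw [hz, zero_mul, mul_zero]
  calc ∑ ij : Fin m × Fin m, g ij.1 ij.2 * ((npc μ (B ij.1)).prod (npc ν (B ij.2))) (B i ×ˢ B j)
      ≤ ∑ ij : Fin m × Fin m, if ij = (i, j) then g i j else 0 :=
        Finset.sum_le_sum fun ij _ => key ij
    _ = g i j := by rw [Finset.sum_ite_eq' Finset.univ (i, j) fun _ => g i j, if_pos (Finset.mem_univ _)]

end LiftPlan2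
section CostMeas

variable {E : Type*} [MeasurableSpace E] {m : ℕ}

lemma liftPlan_cost_le {B : Fin m → Set E} (hBm : ∀ i, MeasurableSet (B i))
    (hdisj : Pairwise (Function.onFun Disjoint B)) (hcov : (⋃ i, B i) = univ)
    {r : Fin m → E} {c : E → E → ℝ} {η : ℝ}
    (hosc : ∀ i j, ∀ a ∈ B i, ∀ b ∈ B j, c a b ≤ c (r i) (r j) + η)
    (g : Fin m → Fin m → ℝ≥0∞) (μ ν : Measure E) :
    ∫⁻ p, ENNReal.ofReal (c p.1 p.2) ∂(liftPlan B g μ ν)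
      ≤ ∑ ij : Fin m × Fin m, g ij.1 ij.2 * ENNReal.ofReal (c (r ij.1) (r ij.2) + η) := by
  have hpt : ∀ p : E × E, ENNReal.ofReal (c p.1 p.2)
      ≤ ∑ ij : Fin m × Fin m, (B ij.1 ×ˢ B ij.2).indicator
          (fun _ => ENNReal.ofReal (c (r ij.1) (r ij.2) + η)) p := by
    rintro ⟨a, b⟩
    obtain ⟨i, hai⟩ : ∃ i, a ∈ B i := mem_iUnion.mp (hcov ▸ mem_univ a)
    obtain ⟨j, hbj⟩ : ∃ j, b ∈ B j := mem_iUnion.mp (hcov ▸ mem_univ b)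
    calc ENNReal.ofReal (c (a, b).1 (a, b).2)
        ≤ (B i ×ˢ B j).indicator (fun _ => ENNReal.ofReal (c (r i) (r j) + η)) (a, b) := by
          rw [indicator_of_mem (mk_mem_prod hai hbj)]
          exact ENNReal.ofReal_le_ofReal (hosc i j a hai b hbj)
      _ ≤ _ := Finset.single_le_sum
          (f := fun ij : Fin m × Fin m => (B ij.1 ×ˢ B ij.2).indicator
            (fun _ => ENNReal.ofReal (c (r ij.1) (r ij.2) + η)) (a, b))
          (fun ij _ => zero_le) (Finset.mem_univ (i, j))
  calc ∫⁻ p, ENNReal.ofReal (c p.1 p.2) ∂(liftPlan B g μ ν)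
      ≤ ∫⁻ p, ∑ ij : Fin m × Fin m, (B ij.1 ×ˢ B ij.2).indicator
          (fun _ => ENNReal.ofReal (c (r ij.1) (r ij.2) + η)) p ∂(liftPlan B g μ ν) :=
        lintegral_mono hpt
    _ = ∑ ij : Fin m × Fin m, ENNReal.ofReal (c (r ij.1) (r ij.2) + η)
          * liftPlan B g μ ν (B ij.1 ×ˢ B ij.2) := by
        rw [lintegral_finset_sum _ fun ij _ =>
          measurable_const.indicator ((hBm ij.1).prod (hBm ij.2))]
        exact Finset.sum_congr rfl fun ij _ =>
          lintegral_indicator_const ((hBm ij.1).prod (hBm ij.2)) _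
    _ ≤ ∑ ij : Fin m × Fin m, g ij.1 ij.2 * ENNReal.ofReal (c (r ij.1) (r ij.2) + η) := by
        refine Finset.sum_le_sum fun ij _ => ?_
        rw [mul_comm]
        exact mul_le_mul_left (liftPlan_cell_le hBm hdisj g μ ν ij.1 ij.2) _

lemma measurable_prod_apply {Ω α β : Type*} [MeasurableSpace Ω] [MeasurableSpace α]
    [MeasurableSpace β] {μ : Ω → Measure α} {ν : Ω → Measure β}
    (hμ : Measurable μ) (hν : Measurable ν)
    (hμ1 : ∀ ω, μ ω univ ≤ 1) (hν1 : ∀ ω, ν ω univ ≤ 1) :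
    ∀ ⦃s : Set (α × β)⦄, MeasurableSet s → Measurable fun ω => (μ ω).prod (ν ω) s := by
  have hfinν : ∀ ω, IsFiniteMeasure (ν ω) := fun ω => ⟨lt_of_le_of_lt (hν1 ω) ENNReal.one_lt_top⟩
  have hfinμ : ∀ ω, IsFiniteMeasure (μ ω) := fun ω => ⟨lt_of_le_of_lt (hμ1 ω) ENNReal.one_lt_top⟩
  refine MeasurableSpace.induction_on_inter
    (C := fun t _ => Measurable fun ω => (μ ω).prod (ν ω) t)
    generateFrom_prod.symm isPiSystem_prod ?_ ?_ ?_ ?_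
  · simp only [measure_empty]; exact measurable_const
  · rintro t ⟨t₁, ht₁, t₂, ht₂, rfl⟩
    have h : ∀ ω, (μ ω).prod (ν ω) (t₁ ×ˢ t₂) = μ ω t₁ * ν ω t₂ := fun ω => by
      haveI := hfinν ω; exact Measure.prod_prod t₁ t₂
    simp_rw [h]
    exact ((Measure.measurable_coe ht₁).comp hμ).mul ((Measure.measurable_coe ht₂).comp hν)
  · intro t ht hC
    have huniv : ∀ ω, (μ ω).prod (ν ω) univ = μ ω univ * ν ω univ := fun ω => by
      haveI := hfinν ω
      rw [← univ_prod_univ]; exact Measure.prod_prod _ _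
    have h : ∀ ω, (μ ω).prod (ν ω) tᶜ = (μ ω).prod (ν ω) univ - (μ ω).prod (ν ω) t := by
      intro ω
      haveI := hfinν ω; haveI := hfinμ ω
      haveI : IsFiniteMeasure ((μ ω).prod (ν ω)) := by infer_instance
      rw [measure_compl ht (measure_ne_top _ _)]
    simp_rw [h, huniv]
    exact (((Measure.measurable_coe MeasurableSet.univ).comp hμ).mul
      ((Measure.measurable_coe MeasurableSet.univ).comp hν)).sub hC
  · intro f hd hm hC
    have h : ∀ ω, (μ ω).prod (ν ω) (⋃ i, f i) = ∑' i, (μ ω).prod (ν ω) (f i) :=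
      fun ω => measure_iUnion hd hm
    simp_rw [h]
    exact Measurable.ennreal_tsum hC

lemma measurable_liftPlan {Ω : Type*} [MeasurableSpace Ω] {B : Fin m → Set E}
    (hBm : ∀ i, MeasurableSet (B i))
    {μ ν : Ω → Measure E} (hμ : Measurable μ) (hν : Measurable ν)
    {g : Ω → Fin m → Fin m → ℝ≥0∞} (hg : ∀ i j, Measurable fun ω => g ω i j) :
    Measurable fun ω => liftPlan B (g ω) (μ ω) (ν ω) := by
  apply Measure.measurable_of_measurable_coe
  intro s hs
  simp_rw [liftPlan_apply]
  apply Finset.measurable_sum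
  intro ij _
  exact (hg ij.1 ij.2).mul (measurable_prod_apply
    (measurable_npc_apply hμ _ (hBm _)) (measurable_npc_apply hν _ (hBm _))
    (fun ω => npc_le_one _ _ _) (fun ω => npc_le_one _ _ _) hs)

end CostMeas
section Repair

variable {m : ℕ}

noncomputable def rowS (g : Fin m → Fin m → ℝ≥0∞) (i : Fin m) : ℝ≥0∞ := ∑ j, g i j
noncomputable def colS (g : Fin m → Fin m → ℝ≥0∞) (j : Fin m) : ℝ≥0∞ := ∑ i, g i j

noncomputable def rstep (p : Fin m → ℝ≥0∞) (g : Fin m → Fin m → ℝ≥0∞) :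
    Fin m → Fin m → ℝ≥0∞ := fun i j => g i j * min 1 (p i / rowS g i)

noncomputable def cstep (q : Fin m → ℝ≥0∞) (g : Fin m → Fin m → ℝ≥0∞) :
    Fin m → Fin m → ℝ≥0∞ := fun i j => g i j * min 1 (q j / colS g j)

noncomputable def repair (p q : Fin m → ℝ≥0∞) (g : Fin m → Fin m → ℝ≥0∞) :
    Fin m → Fin m → ℝ≥0∞ := fun i j =>
  cstep q (rstep p g) i j +
    (p i - rowS (cstep q (rstep p g)) i) * (q j - colS (cstep q (rstep p g)) j)
      / ∑ i', (p i' - rowS (cstep q (rstep p g)) i')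

lemma rstep_le (p : Fin m → ℝ≥0∞) (g : Fin m → Fin m → ℝ≥0∞) (i j : Fin m) :
    rstep p g i j ≤ g i j := by
  calc g i j * min 1 (p i / rowS g i) ≤ g i j * 1 := mul_le_mul_right (min_le_left _ _) _
    _ = g i j := mul_one _

lemma cstep_le (q : Fin m → ℝ≥0∞) (g : Fin m → Fin m → ℝ≥0∞) (i j : Fin m) :
    cstep q g i j ≤ g i j := by
  calc g i j * min 1 (q j / colS g j) ≤ g i j * 1 := mul_le_mul_right (min_le_left _ _) _
    _ = g i j := mul_one _

lemma rowS_mono {g h : Fin m → Fin m → ℝ≥0∞} (hle : ∀ i j, h i j ≤ g i j) (i : Fin m) :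
    rowS h i ≤ rowS g i := Finset.sum_le_sum fun j _ => hle i j

lemma colS_mono {g h : Fin m → Fin m → ℝ≥0∞} (hle : ∀ i j, h i j ≤ g i j) (j : Fin m) :
    colS h j ≤ colS g j := Finset.sum_le_sum fun i _ => hle i j

lemma rowS_rstep_le (p : Fin m → ℝ≥0∞) (g : Fin m → Fin m → ℝ≥0∞) (i : Fin m) :
    rowS (rstep p g) i ≤ p i := by
  have : rowS (rstep p g) i = rowS g i * min 1 (p i / rowS g i) := by
    simp only [rowS, rstep, Finset.sum_mul]
  rw [this]
  calc rowS g i * min 1 (p i / rowS g i) ≤ rowS g i * (p i / rowS g i) :=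
        mul_le_mul_right (min_le_right _ _) _
    _ ≤ p i := ENNReal.mul_div_le

lemma colS_cstep_le (q : Fin m → ℝ≥0∞) (g : Fin m → Fin m → ℝ≥0∞) (j : Fin m) :
    colS (cstep q g) j ≤ q j := by
  have : colS (cstep q g) j = colS g j * min 1 (q j / colS g j) := by
    simp only [colS, cstep, Finset.sum_mul]
  rw [this]
  calc colS g j * min 1 (q j / colS g j) ≤ colS g j * (q j / colS g j) :=
        mul_le_mul_right (min_le_right _ _) _
    _ ≤ q j := ENNReal.mul_div_le

lemma rstep_eq {p : Fin m → ℝ≥0∞} {g : Fin m → Fin m → ℝ≥0∞} {i : Fin m}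
    (h : rowS g i ≤ p i) (hfin : rowS g i ≠ ⊤) (j : Fin m) : rstep p g i j = g i j := by
  rcases eq_or_ne (rowS g i) 0 with h0 | h0
  · have : g i j = 0 := by
      have := Finset.sum_eq_zero_iff.mp h0
      exact this j (Finset.mem_univ j)
    rw [rstep, this, zero_mul]
  · have h1 : (1 : ℝ≥0∞) ≤ p i / rowS g i := by
      rw [ENNReal.le_div_iff_mul_le (Or.inl h0) (Or.inl hfin), one_mul]
      exact h
    rw [rstep, min_eq_left h1, mul_one]

lemma cstep_eq {q : Fin m → ℝ≥0∞} {g : Fin m → Fin m → ℝ≥0∞} {j : Fin m}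
    (h : colS g j ≤ q j) (hfin : colS g j ≠ ⊤) (i : Fin m) : cstep q g i j = g i j := by
  rcases eq_or_ne (colS g j) 0 with h0 | h0
  · have : g i j = 0 := by
      have := Finset.sum_eq_zero_iff.mp h0
      exact this i (Finset.mem_univ i)
    rw [cstep, this, zero_mul]
  · have h1 : (1 : ℝ≥0∞) ≤ q j / colS g j := by
      rw [ENNReal.le_div_iff_mul_le (Or.inl h0) (Or.inl hfin), one_mul]
      exact h
    rw [cstep, min_eq_left h1, mul_one]

lemma repair_eq_of_le {p q : Fin m → ℝ≥0∞} {g : Fin m → Fin m → ℝ≥0∞}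
    (hgfin : ∀ i j, g i j ≠ ⊤)
    (hrow : ∀ i, rowS g i ≤ p i) (hcol : ∀ j, colS g j ≤ q j) :
    repair p q g = fun i j =>
      g i j + (p i - rowS g i) * (q j - colS g j) / ∑ i', (p i' - rowS g i') := by
  have hrfin : ∀ i, rowS g i ≠ ⊤ := fun i =>
    (ENNReal.sum_lt_top.mpr fun j _ => lt_top_iff_ne_top.mpr (hgfin i j)).ne
  have hcfin : ∀ j, colS g j ≠ ⊤ := fun j =>
    (ENNReal.sum_lt_top.mpr fun i _ => lt_top_iff_ne_top.mpr (hgfin i j)).ne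
  have h1 : rstep p g = g := by
    funext i j
    exact rstep_eq (hrow i) (hrfin i) j
  have h2 : cstep q (rstep p g) = g := by
    rw [h1]
    funext i j
    exact cstep_eq (hcol j) (hcfin j) i
  funext i j
  rw [repair, h2]

end Repair
section Repair2

variable {m : ℕ}

lemma sum_rowS (g : Fin m → Fin m → ℝ≥0∞) : ∑ i, rowS g i = ∑ j, colS g j := by
  simp only [rowS, colS]
  exact Finset.sum_comm

lemma ennreal_sum_sub {ι : Type*} (t : Finset ι) {f g : ι → ℝ≥0∞}
    (hle : ∀ i ∈ t, g i ≤ f i) (hffin : ∀ i ∈ t, f i ≠ ⊤) :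
    ∑ i ∈ t, (f i - g i) = ∑ i ∈ t, f i - ∑ i ∈ t, g i := by
  have hgfin : ∑ i ∈ t, g i ≠ ⊤ :=
    (ENNReal.sum_lt_top.mpr fun i hi =>
      lt_of_le_of_lt (hle i hi) (lt_top_iff_ne_top.mpr (hffin i hi))).ne
  refine ENNReal.eq_sub_of_add_eq hgfin ?_
  rw [← Finset.sum_add_distrib]
  exact Finset.sum_congr rfl fun i hi => tsub_add_cancel_of_le (hle i hi)

lemma rowS_repair {p q : Fin m → ℝ≥0∞} {g : Fin m → Fin m → ℝ≥0∞}
    (hgfin : ∀ i j, g i j ≠ ⊤) (hp : ∑ i, p i = 1) (hq : ∑ j, q j = 1) (i : Fin m) :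
    rowS (repair p q g) i = p i := by
  set g2 := cstep q (rstep p g) with hg2
  have hg2le : ∀ i j, g2 i j ≤ g i j := fun i j => (cstep_le _ _ i j).trans (rstep_le _ _ i j)
  have hrow2 : ∀ i, rowS g2 i ≤ p i := fun i =>
    (rowS_mono (fun i j => cstep_le _ _ i j) i).trans (rowS_rstep_le p g i)
  have hcol2 : ∀ j, colS g2 j ≤ q j := fun j => colS_cstep_le _ _ j
  have hpfin : ∀ i, p i ≠ ⊤ := fun i =>
    (lt_of_le_of_lt (Finset.single_le_sum (fun i _ => zero_le) (Finset.mem_univ i))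
      (hp ▸ ENNReal.one_lt_top)).ne
  have hqfin : ∀ j, q j ≠ ⊤ := fun j =>
    (lt_of_le_of_lt (Finset.single_le_sum (fun j _ => zero_le) (Finset.mem_univ j))
      (hq ▸ ENNReal.one_lt_top)).ne
  have hsum_eq : ∑ j, (q j - colS g2 j) = ∑ i', (p i' - rowS g2 i') := by
    rw [ennreal_sum_sub _ (fun j _ => hcol2 j) (fun j _ => hqfin j),
      ennreal_sum_sub _ (fun i _ => hrow2 i) (fun i _ => hpfin i), hp, hq, sum_rowS]
  set s := ∑ i', (p i' - rowS g2 i') with hs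
  have hsle : s ≤ 1 := by
    rw [hs, ← hp]
    exact Finset.sum_le_sum fun i _ => tsub_le_self
  have hsfin : s ≠ ⊤ := (lt_of_le_of_lt hsle ENNReal.one_lt_top).ne
  have expand : rowS (repair p q g) i
      = rowS g2 i + (p i - rowS g2 i) * (s * s⁻¹) := by
    show ∑ j, repair p q g i j = _
    simp only [repair, ← hg2, ← hs]
    rw [Finset.sum_add_distrib]
    congr 1
    simp only [div_eq_mul_inv, mul_assoc, ← Finset.mul_sum]
    congr 1
    rw [← Finset.sum_mul, hsum_eq]
  rcases eq_or_ne s 0 with hs0 | hs0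
  · have hzero : p i - rowS g2 i = 0 :=
      Finset.sum_eq_zero_iff.mp (hs ▸ hs0) i (Finset.mem_univ i)
    rw [expand, hzero, zero_mul, add_zero]
    exact le_antisymm (hrow2 i) (tsub_eq_zero_iff_le.mp hzero)
  · rw [expand, ENNReal.mul_inv_cancel hs0 hsfin, mul_one]
    exact add_tsub_cancel_of_le (hrow2 i)

lemma colS_repair {p q : Fin m → ℝ≥0∞} {g : Fin m → Fin m → ℝ≥0∞}
    (hgfin : ∀ i j, g i j ≠ ⊤) (hp : ∑ i, p i = 1) (hq : ∑ j, q j = 1) (j : Fin m) :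
    colS (repair p q g) j = q j := by
  set g2 := cstep q (rstep p g) with hg2
  have hrow2 : ∀ i, rowS g2 i ≤ p i := fun i =>
    (rowS_mono (fun i j => cstep_le _ _ i j) i).trans (rowS_rstep_le p g i)
  have hcol2 : ∀ j, colS g2 j ≤ q j := fun j => colS_cstep_le _ _ j
  have hpfin : ∀ i, p i ≠ ⊤ := fun i =>
    (lt_of_le_of_lt (Finset.single_le_sum (fun i _ => zero_le) (Finset.mem_univ i))
      (hp ▸ ENNReal.one_lt_top)).ne
  have hqfin : ∀ j, q j ≠ ⊤ := fun j =>
    (lt_of_le_of_lt (Finset.single_le_sum (fun j _ => zero_le) (Finset.mem_univ j))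
      (hq ▸ ENNReal.one_lt_top)).ne
  have hsum_eq : ∑ j, (q j - colS g2 j) = ∑ i', (p i' - rowS g2 i') := by
    rw [ennreal_sum_sub _ (fun j _ => hcol2 j) (fun j _ => hqfin j),
      ennreal_sum_sub _ (fun i _ => hrow2 i) (fun i _ => hpfin i), hp, hq, sum_rowS]
  set s := ∑ i', (p i' - rowS g2 i') with hs
  have hsle : s ≤ 1 := by
    rw [hs, ← hp]
    exact Finset.sum_le_sum fun i _ => tsub_le_self
  have hsfin : s ≠ ⊤ := (lt_of_le_of_lt hsle ENNReal.one_lt_top).ne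
  have expand : colS (repair p q g) j
      = colS g2 j + (q j - colS g2 j) * (s * s⁻¹) := by
    show ∑ i', repair p q g i' j = _
    simp only [repair, ← hg2, ← hs]
    rw [Finset.sum_add_distrib]
    congr 1
    simp only [div_eq_mul_inv]
    have h3 : ∀ i', (p i' - rowS g2 i') * (q j - colS g2 j) * s⁻¹
        = (q j - colS g2 j) * s⁻¹ * (p i' - rowS g2 i') := by
      intro i'; ring
    rw [Finset.sum_congr rfl fun i' _ => h3 i', ← Finset.mul_sum, ← hs]
    ring
  rcases eq_or_ne s 0 with hs0 | hs0
  · have hzero : q j - colS g2 j = 0 := by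
      have h4 : ∑ j, (q j - colS g2 j) = 0 := by rw [hsum_eq]; exact hs0
      exact Finset.sum_eq_zero_iff.mp h4 j (Finset.mem_univ j)
    rw [expand, hzero, zero_mul, add_zero]
    exact le_antisymm (hcol2 j) (tsub_eq_zero_iff_le.mp hzero)
  · rw [expand, ENNReal.mul_inv_cancel hs0 hsfin, mul_one]
    exact add_tsub_cancel_of_le (hcol2 j)

end Repair2
section Partition

lemma exists_partition {E : Type*} [MetricSpace E] [CompactSpace E] [MeasurableSpace E]
    [OpensMeasurableSpace E] [Nonempty E] {c : E → E → ℝ}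
    (hc : Continuous fun p : E × E => c p.1 p.2) {η : ℝ} (hη : 0 < η) :
    ∃ (m : ℕ) (B : Fin m → Set E) (r : Fin m → E),
      (∀ i, MeasurableSet (B i)) ∧ Pairwise (Function.onFun Disjoint B) ∧ (⋃ i, B i) = univ ∧
      (∀ i j, ∀ a ∈ B i, ∀ b ∈ B j, |c a b - c (r i) (r j)| ≤ η) := by
  have huc : UniformContinuous (fun p : E × E => c p.1 p.2) :=
    CompactSpace.uniformContinuous_of_continuous hc
  rw [Metric.uniformContinuous_iff] at huc
  obtain ⟨δ, hδ, hball⟩ := huc η hη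
  obtain ⟨t, ht⟩ := (isCompact_univ : IsCompact (univ : Set E)).elim_finite_subcover
    (fun x : E => Metric.ball x (δ / 2)) (fun x => Metric.isOpen_ball)
    (fun x _ => mem_iUnion.mpr ⟨x, Metric.mem_ball_self (by positivity)⟩)
  classical
  set m := t.card with hm
  set e : Fin m → E := fun i => ((t.equivFin.symm i : t) : E) with he
  set balls : Fin m → Set E := fun i => Metric.ball (e i) (δ / 2) with hballs
  set B : Fin m → Set E := fun i => balls i \ ⋃ (j : Fin m) (_ : j < i), balls j with hB
  have hBsub : ∀ i, B i ⊆ balls i := fun i => diff_subset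
  have hBm : ∀ i, MeasurableSet (B i) := fun i =>
    Metric.isOpen_ball.measurableSet.diff
      (MeasurableSet.iUnion fun j => MeasurableSet.iUnion fun _ =>
        Metric.isOpen_ball.measurableSet)
  have hdisj : Pairwise (Function.onFun Disjoint B) := by
    intro i j hij
    rcases lt_or_gt_of_ne hij with h | h
    · refine Set.disjoint_left.mpr fun a hai haj => ?_
      exact haj.2 (mem_iUnion.mpr ⟨i, mem_iUnion.mpr ⟨h, hBsub i hai⟩⟩)
    · refine Set.disjoint_left.mpr fun a hai haj => ?_
      exact hai.2 (mem_iUnion.mpr ⟨j, mem_iUnion.mpr ⟨h, hBsub j haj⟩⟩)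
  have hcov : (⋃ i, B i) = univ := by
    rw [eq_univ_iff_forall]
    intro x
    have hx : ∃ i : Fin m, x ∈ balls i := by
      have := ht (mem_univ x)
      obtain ⟨y, hy, hxy⟩ := mem_iUnion₂.mp this
      exact ⟨t.equivFin ⟨y, hy⟩, by simp [hballs, he, hxy]⟩
    classical
    let S : Finset (Fin m) := Finset.univ.filter fun i => x ∈ balls i
    have hS : S.Nonempty := by
      obtain ⟨i, hi⟩ := hx
      exact ⟨i, Finset.mem_filter.mpr ⟨Finset.mem_univ i, hi⟩⟩
    set i₀ := S.min' hS with hi₀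
    have hxi₀ : x ∈ balls i₀ := (Finset.mem_filter.mp (S.min'_mem hS)).2
    refine mem_iUnion.mpr ⟨i₀, hxi₀, ?_⟩
    intro hmem
    obtain ⟨j, hj⟩ := mem_iUnion.mp hmem
    obtain ⟨hji, hxj⟩ := mem_iUnion.mp hj
    have : i₀ ≤ j := S.min'_le j (Finset.mem_filter.mpr ⟨Finset.mem_univ j, hxj⟩)
    exact absurd this (not_le.mpr hji)
  set r : Fin m → E := fun i =>
    if h : (B i).Nonempty then h.choose else Classical.arbitrary E with hr
  refine ⟨m, B, r, hBm, hdisj, hcov, ?_⟩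
  intro i j a ha b hb
  have hri : r i ∈ B i := by
    show (if h : (B i).Nonempty then Exists.choose h else Classical.arbitrary E) ∈ B i
    rw [dif_pos ⟨a, ha⟩]
    exact (⟨a, ha⟩ : (B i).Nonempty).choose_spec
  have hrj : r j ∈ B j := by
    show (if h : (B j).Nonempty then Exists.choose h else Classical.arbitrary E) ∈ B j
    rw [dif_pos ⟨b, hb⟩]
    exact (⟨b, hb⟩ : (B j).Nonempty).choose_spec
  have hd1 : dist a (r i) < δ := by
    calc dist a (r i) ≤ dist a (e i) + dist (r i) (e i) := dist_triangle_right _ _ _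
      _ < δ / 2 + δ / 2 := add_lt_add (hBsub i ha) (hBsub i hri)
      _ = δ := by ring
  have hd2 : dist b (r j) < δ := by
    calc dist b (r j) ≤ dist b (e j) + dist (r j) (e j) := dist_triangle_right _ _ _
      _ < δ / 2 + δ / 2 := add_lt_add (hBsub j hb) (hBsub j hrj)
      _ = δ := by ring
  have hdp : dist ((a, b) : E × E) ((r i, r j) : E × E) < δ := by
    rw [Prod.dist_eq]
    exact max_lt hd1 hd2
  have := hball hdp
  rw [Real.dist_eq] at this
  exact this.le

end Partition
section Heart

variable {E : Type*} [MeasurableSpace E] {m : ℕ}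

lemma isProbabilityMeasure_of_map_fst {π : Measure (E × E)} {μ : Measure E}
    [IsProbabilityMeasure μ] (h1 : π.map Prod.fst = μ) : IsProbabilityMeasure π := by
  constructor
  calc π univ = π (Prod.fst ⁻¹' univ) := by rw [preimage_univ]
    _ = (π.map Prod.fst) univ := (Measure.map_apply measurable_fst MeasurableSet.univ).symm
    _ = μ univ := by rw [h1]
    _ = 1 := measure_univ

lemma exists_plan_cost_le
    {c : E → E → ℝ} (hc0 : ∀ x y, 0 ≤ c x y) {D : ℝ} (hD : 0 ≤ D) (hcD : ∀ x y, c x y ≤ D)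
    {B : Fin m → Set E} (hBm : ∀ i, MeasurableSet (B i))
    (hdisj : Pairwise (Function.onFun Disjoint B)) (hcov : (⋃ i, B i) = univ)
    {r : Fin m → E} {η : ℝ} (hη : 0 < η)
    (hosc : ∀ i j, ∀ a ∈ B i, ∀ b ∈ B j, |c a b - c (r i) (r j)| ≤ η)
    {μ ν : Measure E} [IsProbabilityMeasure μ] [IsProbabilityMeasure ν]
    (π : Measure (E × E)) (h1 : π.map Prod.fst = μ) (h2 : π.map Prod.snd = ν)
    {δ : ℝ} (hδ : 0 < δ) :
    ∃ γ : Fin m → Fin m → ℚ,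
      ∫⁻ z, ENNReal.ofReal (c z.1 z.2)
          ∂(liftPlan B (repair (fun i => μ (B i)) (fun j => ν (B j))
              (fun i j => ENNReal.ofReal (γ i j))) μ ν)
        ≤ ∫⁻ z, ENNReal.ofReal (c z.1 z.2) ∂π
            + ENNReal.ofReal (2 * η) + ENNReal.ofReal δ := by
  haveI hπ : IsProbabilityMeasure π := isProbabilityMeasure_of_map_fst h1
  set p : Fin m → ℝ≥0∞ := fun i => μ (B i) with hp_def
  set q : Fin m → ℝ≥0∞ := fun j => ν (B j) with hq_def
  set β : Fin m → Fin m → ℝ≥0∞ := fun i j => π (B i ×ˢ B j) with hβ_def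
  have hp1 : ∑ i, p i = 1 := by
    have h := measure_eq_sum_partition (μ := μ) hBm hdisj hcov MeasurableSet.univ
    simp only [univ_inter, measure_univ] at h
    exact h.symm
  have hq1 : ∑ j, q j = 1 := by
    have h := measure_eq_sum_partition (μ := ν) hBm hdisj hcov MeasurableSet.univ
    simp only [univ_inter, measure_univ] at h
    exact h.symm
  have hproddisj : ∀ i : Fin m, Pairwise (Function.onFun Disjoint fun j => B i ×ˢ B j) := by
    intro i j j' hne
    refine Set.disjoint_left.mpr fun z hz hz' => ?_
    exact Set.disjoint_left.mp (hdisj hne) hz.2 hz'.2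
  have hβrow : ∀ i, ∑ j, β i j = p i := by
    intro i
    have hU : B i ×ˢ univ = ⋃ j, B i ×ˢ B j := by rw [← prod_iUnion, hcov]
    have : π (B i ×ˢ univ) = ∑ j, β i j := by
      rw [hU, measure_iUnion (hproddisj i) fun j => (hBm i).prod (hBm j), tsum_fintype]
    rw [← this, prod_univ, ← Measure.map_apply measurable_fst (hBm i), h1]
  have hβcol : ∀ j, ∑ i, β i j = q j := by
    intro j
    have hU : univ ×ˢ B j = ⋃ i, B i ×ˢ B j := by rw [← iUnion_prod_const, hcov]
    have hd : Pairwise (Function.onFun Disjoint fun i => B i ×ˢ B j) := by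
      intro i i' hne
      refine Set.disjoint_left.mpr fun z hz hz' => ?_
      exact Set.disjoint_left.mp (hdisj hne) hz.1 hz'.1
    have : π (univ ×ˢ B j) = ∑ i, β i j := by
      rw [hU, measure_iUnion hd fun i => (hBm i).prod (hBm j), tsum_fintype]
    rw [← this, univ_prod, ← Measure.map_apply measurable_snd (hBm j), h2]
  have hβfin : ∀ i j, β i j ≠ ⊤ := fun i j => (measure_lt_top π _).ne
  -- choice of δ'
  set K : ℝ := (D + η) * (m * m) with hK
  have hK0 : 0 ≤ K := by positivity
  set δ' : ℝ := δ / (K + 1) with hδ'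
  have hδ'0 : 0 < δ' := by positivity
  -- rational approximation of β from below
  have hexist : ∀ i j, ∃ γq : ℚ, ENNReal.ofReal (γq : ℝ) ≤ β i j
      ∧ β i j ≤ ENNReal.ofReal (γq : ℝ) + ENNReal.ofReal δ' := by
    intro i j
    set tr := (β i j).toReal with htr
    have htr0 : 0 ≤ tr := ENNReal.toReal_nonneg
    have hβeq : β i j = ENNReal.ofReal tr := (ENNReal.ofReal_toReal (hβfin i j)).symm
    rcases htr0.lt_or_eq with hpos | hzero
    · obtain ⟨γq, hγ1, hγ2⟩ := exists_rat_btwn (show max 0 (tr - δ') < tr from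
        max_lt hpos (by linarith))
      refine ⟨γq, ?_, ?_⟩
      · rw [hβeq]
        exact ENNReal.ofReal_le_ofReal hγ2.le
      · rw [hβeq, ← ENNReal.ofReal_add (by
          have : (0:ℝ) ≤ max 0 (tr - δ') := le_max_left _ _
          have := this.trans hγ1.le
          exact_mod_cast this) hδ'0.le]
        apply ENNReal.ofReal_le_ofReal
        have : tr - δ' ≤ max 0 (tr - δ') := le_max_right _ _
        linarith [this.trans hγ1.le]
    · refine ⟨0, ?_, ?_⟩
      · simp
      · rw [hβeq, ← hzero]
        simp
  choose γ hγle hγge using hexist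
  refine ⟨γ, ?_⟩
  set g : Fin m → Fin m → ℝ≥0∞ := fun i j => ENNReal.ofReal (γ i j) with hg_def
  have hgfin : ∀ i j, g i j ≠ ⊤ := fun i j => ENNReal.ofReal_ne_top
  have hrowle : ∀ i, rowS g i ≤ p i := fun i =>
    (Finset.sum_le_sum fun j _ => hγle i j).trans_eq (hβrow i)
  have hcolle : ∀ j, colS g j ≤ q j := fun j =>
    (Finset.sum_le_sum fun i _ => hγle i j).trans_eq (hβcol j)
  have hrep := repair_eq_of_le hgfin hrowle hcolle
  set w : Fin m → Fin m → ℝ≥0∞ := fun i j => ENNReal.ofReal (c (r i) (r j) + η) with hw_def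
  have hosc1 : ∀ i j, ∀ a ∈ B i, ∀ b ∈ B j, c a b ≤ c (r i) (r j) + η := by
    intro i j a ha b hb
    have := hosc i j a ha b hb
    rw [abs_le] at this
    linarith [this.1]
  have hosc2 : ∀ i j, ∀ a ∈ B i, ∀ b ∈ B j, c (r i) (r j) ≤ c a b + η := by
    intro i j a ha b hb
    have := hosc i j a ha b hb
    rw [abs_le] at this
    linarith [this.2]
  have step0 := liftPlan_cost_le hBm hdisj hcov hosc1 (repair p q g) μ ν
  -- split the sum
  set s₀ : ℝ≥0∞ := ∑ i, (p i - rowS g i) with hs₀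
  have hwW : ∀ i j, w i j ≤ ENNReal.ofReal (D + η) := fun i j =>
    ENNReal.ofReal_le_ofReal (by linarith [hcD (r i) (r j)])
  have hsplit : ∑ ij : Fin m × Fin m, repair p q g ij.1 ij.2 * w ij.1 ij.2
      = (∑ ij : Fin m × Fin m, g ij.1 ij.2 * w ij.1 ij.2)
        + ∑ ij : Fin m × Fin m, (p ij.1 - rowS g ij.1) * (q ij.2 - colS g ij.2) / s₀
            * w ij.1 ij.2 := by
    rw [← Finset.sum_add_distrib]
    refine Finset.sum_congr rfl fun ij _ => ?_
    rw [hrep]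
    ring
  have hpfin : ∀ i, p i ≠ ⊤ := fun i => measure_ne_top μ _
  have hqfin : ∀ j, q j ≠ ⊤ := fun j => measure_ne_top ν _
  have hqtsum : ∑ j, (q j - colS g j) = s₀ := by
    rw [hs₀, ennreal_sum_sub _ (fun j _ => hcolle j) (fun j _ => hqfin j),
      ennreal_sum_sub _ (fun i _ => hrowle i) (fun i _ => hpfin i), hp1, hq1, sum_rowS]
  have hs₀le : s₀ ≤ (m * m : ℕ) * ENNReal.ofReal δ' := by
    have hone : ∀ i, p i - rowS g i ≤ ∑ j, (β i j - g i j) := by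
      intro i
      rw [← hβrow i]
      refine tsub_le_iff_right.mpr ?_
      rw [rowS, ← Finset.sum_add_distrib]
      exact Finset.sum_le_sum fun j _ => le_tsub_add
    calc s₀ ≤ ∑ i, ∑ j, (β i j - g i j) := Finset.sum_le_sum fun i _ => hone i
      _ ≤ ∑ _i : Fin m, ∑ _j : Fin m, ENNReal.ofReal δ' :=
          Finset.sum_le_sum fun i _ => Finset.sum_le_sum fun j _ =>
            tsub_le_iff_right.mpr ((hγge i j).trans_eq (add_comm _ _))
      _ = (m * m : ℕ) * ENNReal.ofReal δ' := by
          rw [Finset.sum_const, Finset.sum_const, Finset.card_univ, Fintype.card_fin,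
            nsmul_eq_mul, nsmul_eq_mul, ← mul_assoc]
          push_cast
          ring
  have hrem : ∑ ij : Fin m × Fin m,
      (p ij.1 - rowS g ij.1) * (q ij.2 - colS g ij.2) / s₀ * w ij.1 ij.2
      ≤ ENNReal.ofReal δ := by
    have hstep1 : ∑ ij : Fin m × Fin m,
        (p ij.1 - rowS g ij.1) * (q ij.2 - colS g ij.2) / s₀ * w ij.1 ij.2
        ≤ (∑ ij : Fin m × Fin m, (p ij.1 - rowS g ij.1) * (q ij.2 - colS g ij.2) / s₀)
          * ENNReal.ofReal (D + η) := by
      rw [Finset.sum_mul]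
      exact Finset.sum_le_sum fun ij _ => mul_le_mul_right (hwW ij.1 ij.2) _
    have hstep2 : ∑ ij : Fin m × Fin m,
        (p ij.1 - rowS g ij.1) * (q ij.2 - colS g ij.2) / s₀ ≤ s₀ := by
      rw [Fintype.sum_prod_type]
      have hinner : ∀ i, ∑ j, (p i - rowS g i) * (q j - colS g j) / s₀
          ≤ p i - rowS g i := by
        intro i
        simp only [div_eq_mul_inv, mul_assoc, ← Finset.mul_sum]
        calc (p i - rowS g i) * ∑ j, (q j - colS g j) * s₀⁻¹
            = (p i - rowS g i) * (s₀ * s₀⁻¹) := by rw [← Finset.sum_mul, hqtsum]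
          _ ≤ (p i - rowS g i) * 1 :=
              mul_le_mul_right (by rw [mul_comm]; exact ennreal_inv_mul_le_one) _
          _ = _ := mul_one _
      calc ∑ i, ∑ j, (p i - rowS g i) * (q j - colS g j) / s₀
          ≤ ∑ i, (p i - rowS g i) := Finset.sum_le_sum fun i _ => hinner i
        _ = s₀ := hs₀.symm
    calc ∑ ij : Fin m × Fin m,
        (p ij.1 - rowS g ij.1) * (q ij.2 - colS g ij.2) / s₀ * w ij.1 ij.2
        ≤ s₀ * ENNReal.ofReal (D + η) := hstep1.trans (mul_le_mul_left hstep2 _)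
      _ ≤ (m * m : ℕ) * ENNReal.ofReal δ' * ENNReal.ofReal (D + η) :=
          mul_le_mul_left hs₀le _
      _ = ENNReal.ofReal (((m * m : ℕ) : ℝ) * δ' * (D + η)) := by
          rw [ENNReal.ofReal_mul (by positivity), ENNReal.ofReal_mul (by positivity),
            ENNReal.ofReal_natCast]
      _ ≤ ENNReal.ofReal δ := by
          apply ENNReal.ofReal_le_ofReal
          have hK1 : (0:ℝ) < K + 1 := by linarith
          have heq : ((m * m : ℕ) : ℝ) * δ' * (D + η) = (K / (K + 1)) * δ := by
            rw [hδ', hK]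
            push_cast
            field_simp
          rw [heq]
          have hfrac : K / (K + 1) ≤ 1 := by
            rw [div_le_one hK1]
            linarith
          calc K / (K + 1) * δ ≤ 1 * δ := mul_le_mul_of_nonneg_right hfrac hδ.le
            _ = δ := one_mul δ
  have hC : ∑ ij : Fin m × Fin m, g ij.1 ij.2 * w ij.1 ij.2
      ≤ ∫⁻ z, ENNReal.ofReal (c z.1 z.2) ∂π + ENNReal.ofReal (2 * η) := by
    have hgβ : ∑ ij : Fin m × Fin m, g ij.1 ij.2 * w ij.1 ij.2
        ≤ ∑ ij : Fin m × Fin m, β ij.1 ij.2 * w ij.1 ij.2 :=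
      Finset.sum_le_sum fun ij _ => mul_le_mul_left (hγle ij.1 ij.2) _
    have heq : ∑ ij : Fin m × Fin m, β ij.1 ij.2 * w ij.1 ij.2
        = ∫⁻ z, (∑ ij : Fin m × Fin m,
            (B ij.1 ×ˢ B ij.2).indicator (fun _ => w ij.1 ij.2) z) ∂π := by
      rw [lintegral_finset_sum _ fun ij _ =>
        measurable_const.indicator ((hBm ij.1).prod (hBm ij.2))]
      exact Finset.sum_congr rfl fun ij _ => by
        rw [lintegral_indicator_const ((hBm ij.1).prod (hBm ij.2)), mul_comm]
    have hpt : ∀ z : E × E, (∑ ij : Fin m × Fin m,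
          (B ij.1 ×ˢ B ij.2).indicator (fun _ => w ij.1 ij.2) z)
        ≤ ENNReal.ofReal (c z.1 z.2 + 2 * η) := by
      rintro ⟨a, b⟩
      obtain ⟨i₀, hi₀⟩ : ∃ i, a ∈ B i := mem_iUnion.mp (hcov ▸ mem_univ a)
      obtain ⟨j₀, hj₀⟩ : ∃ j, b ∈ B j := mem_iUnion.mp (hcov ▸ mem_univ b)
      have huniq : ∀ ij : Fin m × Fin m, ij ∈ Finset.univ → ij ≠ (i₀, j₀) →
          (B ij.1 ×ˢ B ij.2).indicator (fun _ => w ij.1 ij.2) (a, b) = 0 := by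
        rintro ⟨i, j⟩ - hne
        rcases eq_or_ne i i₀ with rfl | hi
        · rcases eq_or_ne j j₀ with rfl | hj
          · exact absurd rfl hne
          · apply indicator_of_notMem
            rintro ⟨-, hb2⟩
            exact Set.disjoint_left.mp (hdisj hj) hb2 hj₀
        · apply indicator_of_notMem
          rintro ⟨ha2, -⟩
          exact Set.disjoint_left.mp (hdisj hi) ha2 hi₀
      rw [Finset.sum_eq_single (i₀, j₀) huniq (fun h => absurd (Finset.mem_univ _) h)]
      rw [indicator_of_mem (mk_mem_prod hi₀ hj₀)]
      exact ENNReal.ofReal_le_ofReal (by linarith [hosc2 i₀ j₀ a hi₀ b hj₀])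
    have hfin : ∫⁻ z, (∑ ij : Fin m × Fin m,
          (B ij.1 ×ˢ B ij.2).indicator (fun _ => w ij.1 ij.2) z) ∂π
        ≤ ∫⁻ z, ENNReal.ofReal (c z.1 z.2 + 2 * η) ∂π := lintegral_mono hpt
    have hsplit2 : ∫⁻ z, ENNReal.ofReal (c z.1 z.2 + 2 * η) ∂π
        = ∫⁻ z, ENNReal.ofReal (c z.1 z.2) ∂π + ENNReal.ofReal (2 * η) := by
      have hzz : ∀ z : E × E, ENNReal.ofReal (c z.1 z.2 + 2 * η)
          = ENNReal.ofReal (c z.1 z.2) + ENNReal.ofReal (2 * η) := fun z =>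
        ENNReal.ofReal_add (hc0 _ _) (by positivity)
      simp_rw [hzz]
      rw [lintegral_add_right _ measurable_const, lintegral_const, measure_univ, mul_one]
    calc ∑ ij : Fin m × Fin m, g ij.1 ij.2 * w ij.1 ij.2
        ≤ ∑ ij : Fin m × Fin m, β ij.1 ij.2 * w ij.1 ij.2 := hgβ
      _ ≤ ∫⁻ z, ENNReal.ofReal (c z.1 z.2 + 2 * η) ∂π := heq ▸ hfin
      _ = _ := hsplit2
  calc ∫⁻ z, ENNReal.ofReal (c z.1 z.2) ∂(liftPlan B (repair p q g) μ ν)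
      ≤ ∑ ij : Fin m × Fin m, repair p q g ij.1 ij.2
          * ENNReal.ofReal (c (r ij.1) (r ij.2) + η) := step0
    _ = (∑ ij : Fin m × Fin m, g ij.1 ij.2 * w ij.1 ij.2)
        + ∑ ij : Fin m × Fin m, (p ij.1 - rowS g ij.1) * (q ij.2 - colS g ij.2) / s₀
            * w ij.1 ij.2 := hsplit
    _ ≤ (∫⁻ z, ENNReal.ofReal (c z.1 z.2) ∂π + ENNReal.ofReal (2 * η))
        + ENNReal.ofReal δ := add_le_add hC hrem

end Heart
section MeasRepair

lemma measurable_repair {Ω : Type*} [MeasurableSpace Ω] {m : ℕ} {p q : Ω → Fin m → ℝ≥0∞}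
    (hp : ∀ i, Measurable fun ω => p ω i) (hq : ∀ j, Measurable fun ω => q ω j)
    (g : Fin m → Fin m → ℝ≥0∞) (i j : Fin m) :
    Measurable fun ω => repair (p ω) (q ω) g i j := by
  have hrstep : ∀ i' j', Measurable fun ω => rstep (p ω) g i' j' := by
    intro i' j'
    unfold rstep rowS
    exact measurable_const.mul ((measurable_const.min ((hp i').div measurable_const)))
  have hcstep : ∀ i' j', Measurable fun ω => cstep (q ω) (rstep (p ω) g) i' j' := by
    intro i' j'
    unfold cstep colS
    exact (hrstep i' j').mul (measurable_const.min
      ((hq j').div (Finset.measurable_sum _ fun i'' _ => hrstep i'' j')))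
  have hrow : ∀ i', Measurable fun ω => rowS (cstep (q ω) (rstep (p ω) g)) i' := by
    intro i'
    unfold rowS
    exact Finset.measurable_sum _ fun j'' _ => hcstep i' j''
  have hcol : ∀ j', Measurable fun ω => colS (cstep (q ω) (rstep (p ω) g)) j' := by
    intro j'
    unfold colS
    exact Finset.measurable_sum _ fun i'' _ => hcstep i'' j'
  unfold repair
  exact (hcstep i j).add ((((hp i).sub (hrow i)).mul ((hq j).sub (hcol j))).div
    (Finset.measurable_sum _ fun i'' _ => (hp i'').sub (hrow i'')))

end MeasRepair

/-- For measurable `q₁, q₂ : Ω → 𝒫(U)` (`U ⊂ ℝ^l` compact) on a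
probability space `(Ω, ℱ, P)`, the mean measures `q̄ᵢ = ∫ qᵢ(ω) P(dω)` satisfy
`W_{2,U}(q̄₁, q̄₂)² ≤ ∫ W_{2,U}(q₁(ω), q₂(ω))² P(dω)`. -/
theorem stmt5 {l : ℕ} (U : Set (EuclideanSpace ℝ (Fin l))) (hU : IsCompact U)
    {Ω : Type*} [MeasurableSpace Ω] (P : Measure Ω) [IsProbabilityMeasure P]
    (q₁ q₂ : Ω → Measure U) (hq₁ : Measurable q₁) (hq₂ : Measurable q₂)
    (hp₁ : ∀ ω, IsProbabilityMeasure (q₁ ω)) (hp₂ : ∀ ω, IsProbabilityMeasure (q₂ ω)) :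
    W2sq (fun (u v : U) => dist u v ^ 2) (P.bind q₁) (P.bind q₂)
      ≤ ∫ ω, W2sq (fun (u v : U) => dist u v ^ 2) (q₁ ω) (q₂ ω) ∂P := by
  classical
  -- nonemptiness
  have hΩne : Nonempty Ω := by
    by_contra h
    rw [not_nonempty_iff] at h
    have h1 := measure_univ (μ := P)
    rw [Set.univ_eq_empty_iff.mpr h, measure_empty] at h1
    exact zero_ne_one h1
  obtain ⟨ω₀⟩ := hΩne
  have hUne : Nonempty U := by
    by_contra h
    rw [not_nonempty_iff] at h
    have h1 := measure_univ (μ := q₁ ω₀)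
    rw [Set.univ_eq_empty_iff.mpr h, measure_empty] at h1
    exact zero_ne_one h1
  haveI : CompactSpace U := isCompact_iff_compactSpace.mp hU
  set c : U → U → ℝ := fun u v => dist u v ^ 2 with hc
  have hccont : Continuous fun z : U × U => c z.1 z.2 :=
    (continuous_fst.dist continuous_snd).pow 2
  have hcm : Measurable fun z : U × U => c z.1 z.2 := hccont.measurable
  have hc0 : ∀ x y : U, 0 ≤ c x y := fun x y => pow_nonneg dist_nonneg 2
  -- uniform bound on the cost
  obtain ⟨D₀, hD₀⟩ := Metric.isBounded_iff.mp hU.isBounded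
  obtain ⟨u₀⟩ := hUne
  haveI : Nonempty U := ⟨u₀⟩
  have hD₀0 : 0 ≤ D₀ := by
    have := hD₀ u₀.2 u₀.2
    simpa using this
  set D : ℝ := D₀ ^ 2 with hD_def
  have hD : 0 ≤ D := by positivity
  have hcD : ∀ x y : U, c x y ≤ D := by
    intro x y
    have h1 : dist x y ≤ D₀ := by
      rw [Subtype.dist_eq]
      exact hD₀ x.2 y.2
    exact pow_le_pow_left₀ dist_nonneg h1 2
  -- partitions of mesh 1/(n+1)
  have hpart : ∀ n : ℕ, ∃ (M : ℕ) (B : Fin M → Set U) (r : Fin M → U),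
      (∀ i, MeasurableSet (B i)) ∧ Pairwise (Function.onFun Disjoint B) ∧ (⋃ i, B i) = Set.univ ∧
      (∀ i j, ∀ a ∈ B i, ∀ b ∈ B j, |c a b - c (r i) (r j)| ≤ 1 / (n + 1)) :=
    fun n => exists_partition hccont (by positivity)
  choose M Bp rp hBm hdisj hcov hosc using hpart
  -- countable index of candidate plans
  let K := (n : ℕ) × (Fin (M n) → Fin (M n) → ℚ)
  haveI : Countable K := by infer_instance
  haveI : Nonempty K := ⟨⟨0, fun _ _ => 0⟩⟩
  -- candidate couplings and their costs
  let G0 : K → Ω → Measure (U × U) := fun k ω =>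
    liftPlan (Bp k.1) (repair (fun i => q₁ ω (Bp k.1 i)) (fun j => q₂ ω (Bp k.1 j))
      (fun i j => ENNReal.ofReal (k.2 i j))) (q₁ ω) (q₂ ω)
  let cost : K → Ω → ℝ≥0∞ := fun k ω => ∫⁻ z, ENNReal.ofReal (c z.1 z.2) ∂(G0 k ω)
  have hsum1 : ∀ ω : Ω, ∀ n : ℕ, ∑ i, q₁ ω (Bp n i) = 1 := by
    intro ω n
    haveI := hp₁ ω
    have h := measure_eq_sum_partition (μ := q₁ ω) (hBm n) (hdisj n) (hcov n)
      MeasurableSet.univ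
    simp only [Set.univ_inter, measure_univ] at h
    exact h.symm
  have hsum2 : ∀ ω : Ω, ∀ n : ℕ, ∑ j, q₂ ω (Bp n j) = 1 := by
    intro ω n
    haveI := hp₂ ω
    have h := measure_eq_sum_partition (μ := q₂ ω) (hBm n) (hdisj n) (hcov n)
      MeasurableSet.univ
    simp only [Set.univ_inter, measure_univ] at h
    exact h.symm
  have hGfst : ∀ k ω, (G0 k ω).map Prod.fst = q₁ ω := by
    intro k ω
    haveI := hp₁ ω; haveI := hp₂ ω
    exact liftPlan_map_fst (hBm k.1) (hdisj k.1) (hcov k.1)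
      (fun i => rowS_repair (fun i j => ENNReal.ofReal_ne_top)
        (hsum1 ω k.1) (hsum2 ω k.1) i)
      (fun j => colS_repair (fun i j => ENNReal.ofReal_ne_top)
        (hsum1 ω k.1) (hsum2 ω k.1) j)
  have hGsnd : ∀ k ω, (G0 k ω).map Prod.snd = q₂ ω := by
    intro k ω
    haveI := hp₁ ω; haveI := hp₂ ω
    exact liftPlan_map_snd (hBm k.1) (hdisj k.1) (hcov k.1)
      (fun i => rowS_repair (fun i j => ENNReal.ofReal_ne_top)
        (hsum1 ω k.1) (hsum2 ω k.1) i)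
      (fun j => colS_repair (fun i j => ENNReal.ofReal_ne_top)
        (hsum1 ω k.1) (hsum2 ω k.1) j)
  haveI hGprob : ∀ k ω, IsProbabilityMeasure (G0 k ω) := by
    intro k ω
    haveI := hp₁ ω
    exact isProbabilityMeasure_of_map_fst (hGfst k ω)
  have hG0meas : ∀ k, Measurable (G0 k) := by
    intro k
    exact measurable_liftPlan (hBm k.1) hq₁ hq₂
      (fun i j => measurable_repair
        (fun i => (Measure.measurable_coe (hBm k.1 i)).comp hq₁)
        (fun j => (Measure.measurable_coe (hBm k.1 j)).comp hq₂) _ i j)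
  have hcost_meas : ∀ k, Measurable (cost k) := fun k =>
    (Measure.measurable_lintegral (hcm.ennreal_ofReal)).comp (hG0meas k)
  have hcostD : ∀ k ω, cost k ω ≤ ENNReal.ofReal D := by
    intro k ω
    calc cost k ω ≤ ∫⁻ _z, ENNReal.ofReal D ∂(G0 k ω) :=
          lintegral_mono fun z => ENNReal.ofReal_le_ofReal (hcD z.1 z.2)
      _ = ENNReal.ofReal D := by
          rw [lintegral_const, measure_univ, mul_one]
  set f' : Ω → ℝ≥0∞ := fun ω => ⨅ k : K, cost k ω with hf'_def
  have hf'meas : Measurable f' := Measurable.iInf fun k => hcost_meas k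
  have hf'D : ∀ ω, f' ω ≤ ENNReal.ofReal D := fun ω =>
    (iInf_le _ (⟨0, fun _ _ => 0⟩ : K)).trans (hcostD _ ω)
  have hf'top : ∀ ω, f' ω ≠ ⊤ := fun ω =>
    (lt_of_le_of_lt (hf'D ω) ENNReal.ofReal_lt_top).ne
  -- real cost of a coupling equals toReal of the lintegral
  have hreal : ∀ (ρ : Measure (U × U)), ∫ z, c z.1 z.2 ∂ρ
      = (∫⁻ z, ENNReal.ofReal (c z.1 z.2) ∂ρ).toReal := fun ρ =>
    integral_eq_lintegral_of_nonneg_ae (Filter.Eventually.of_forall fun z => hc0 z.1 z.2)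
      hccont.aestronglyMeasurable
  have hW2le : ∀ k ω, W2sq c (q₁ ω) (q₂ ω) ≤ (cost k ω).toReal := by
    intro k ω
    have h := W2sq_le_cost hc0 (G0 k ω) (hGfst k ω) (hGsnd k ω)
    rwa [hreal (G0 k ω)] at h
  have hcosttop : ∀ k ω, cost k ω ≠ ⊤ := fun k ω =>
    (lt_of_le_of_lt (hcostD k ω) ENNReal.ofReal_lt_top).ne
  have hW2ge : ∀ ω, ∀ δ : ℝ, 0 < δ →
      f' ω ≤ ENNReal.ofReal (W2sq c (q₁ ω) (q₂ ω) + δ) := by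
    intro ω δ hδ
    haveI := hp₁ ω; haveI := hp₂ ω
    have hSne : {r : ℝ | ∃ π : Measure (U × U),
        π.map Prod.fst = q₁ ω ∧ π.map Prod.snd = q₂ ω ∧ r = ∫ z, c z.1 z.2 ∂π}.Nonempty := by
      refine ⟨∫ z, c z.1 z.2 ∂((q₁ ω).prod (q₂ ω)), (q₁ ω).prod (q₂ ω), ?_, ?_, rfl⟩
      · rw [Measure.map_fst_prod, measure_univ, one_smul]
      · rw [Measure.map_snd_prod, measure_univ, one_smul]
    obtain ⟨rr, hrrmem, hrrlt⟩ := Real.lt_sInf_add_pos hSne (show (0:ℝ) < δ/2 by positivity)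
    obtain ⟨π, hπ1, hπ2, hrr⟩ := hrrmem
    obtain ⟨n, hn⟩ := exists_nat_one_div_lt (show (0:ℝ) < δ/8 by positivity)
    have hη : (0:ℝ) < 1/(n+1) := by positivity
    obtain ⟨γ, hγ⟩ := exists_plan_cost_le hc0 hD hcD (hBm n) (hdisj n) (hcov n)
      hη (hosc n) π hπ1 hπ2 (show (0:ℝ) < δ/4 by positivity)
    haveI : IsProbabilityMeasure π := isProbabilityMeasure_of_map_fst hπ1
    have hπfin : ∫⁻ z, ENNReal.ofReal (c z.1 z.2) ∂π ≠ ⊤ := by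
      have hb : ∫⁻ z, ENNReal.ofReal (c z.1 z.2) ∂π ≤ ENNReal.ofReal D := by
        calc ∫⁻ z, ENNReal.ofReal (c z.1 z.2) ∂π ≤ ∫⁻ _z, ENNReal.ofReal D ∂π :=
              lintegral_mono fun z => ENNReal.ofReal_le_ofReal (hcD z.1 z.2)
          _ = ENNReal.ofReal D := by rw [lintegral_const, measure_univ, mul_one]
      exact (lt_of_le_of_lt hb ENNReal.ofReal_lt_top).ne
    have hπr : ∫⁻ z, ENNReal.ofReal (c z.1 z.2) ∂π = ENNReal.ofReal rr := by
      rw [hrr, hreal π, ENNReal.ofReal_toReal hπfin]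
    have hrr0 : 0 ≤ rr := by
      rw [hrr]; exact integral_nonneg fun z => hc0 _ _
    have h3 : rr < W2sq c (q₁ ω) (q₂ ω) + δ/2 := by
      unfold W2sq
      exact hrrlt
    calc f' ω ≤ cost (⟨n, γ⟩ : K) ω := iInf_le _ _
      _ ≤ ENNReal.ofReal rr + ENNReal.ofReal (2 * (1/(n+1))) + ENNReal.ofReal (δ/4) := by
          rw [← hπr]; exact hγ
      _ = ENNReal.ofReal (rr + 2 * (1/(n+1)) + δ/4) := by
          rw [ENNReal.ofReal_add (by positivity) (by positivity),
            ENNReal.ofReal_add hrr0 (by positivity)]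
      _ ≤ ENNReal.ofReal (W2sq c (q₁ ω) (q₂ ω) + δ) := by
          apply ENNReal.ofReal_le_ofReal
          have h2 : 2 * (1/(n+1) : ℝ) ≤ δ/4 := by linarith
          linarith
  have hW2eq : ∀ ω, W2sq c (q₁ ω) (q₂ ω) = (f' ω).toReal := by
    intro ω
    apply le_antisymm
    · have h1 : ENNReal.ofReal (W2sq c (q₁ ω) (q₂ ω)) ≤ f' ω := by
        refine le_iInf fun k => ?_
        calc ENNReal.ofReal (W2sq c (q₁ ω) (q₂ ω))
            ≤ ENNReal.ofReal ((cost k ω).toReal) := ENNReal.ofReal_le_ofReal (hW2le k ω)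
          _ = cost k ω := ENNReal.ofReal_toReal (hcosttop k ω)
      have h2 := ENNReal.toReal_mono (hf'top ω) h1
      rwa [ENNReal.toReal_ofReal (W2sq_nonneg c hc0 _ _)] at h2
    · apply _root_.le_of_forall_pos_le_add
      intro δ hδ
      have h1 := hW2ge ω δ hδ
      have h2 := ENNReal.toReal_mono ENNReal.ofReal_ne_top h1
      rwa [ENNReal.toReal_ofReal (by
        have := W2sq_nonneg c hc0 (q₁ ω) (q₂ ω)
        linarith)] at h2
  have hIntf'top : ∫⁻ ω, f' ω ∂P ≠ ⊤ := by
    have hb : ∫⁻ ω, f' ω ∂P ≤ ENNReal.ofReal D := by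
      calc ∫⁻ ω, f' ω ∂P ≤ ∫⁻ _ω, ENNReal.ofReal D ∂P := lintegral_mono hf'D
        _ = ENNReal.ofReal D := by rw [lintegral_const, measure_univ, mul_one]
    exact (lt_of_le_of_lt hb ENNReal.ofReal_lt_top).ne
  have hRHS : ∫ ω, W2sq c (q₁ ω) (q₂ ω) ∂P = (∫⁻ ω, f' ω ∂P).toReal := by
    calc ∫ ω, W2sq c (q₁ ω) (q₂ ω) ∂P = ∫ ω, (f' ω).toReal ∂P :=
        integral_congr_ae (Filter.Eventually.of_forall fun ω => hW2eq ω)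
      _ = (∫⁻ ω, f' ω ∂P).toReal := integral_toReal hf'meas.aemeasurable
          (Filter.Eventually.of_forall fun ω =>
            lt_of_le_of_lt (hf'D ω) ENNReal.ofReal_lt_top)
  rw [hRHS]
  apply _root_.le_of_forall_pos_le_add
  intro ε hε
  obtain ⟨en, hen⟩ := exists_surjective_nat K
  have hsel : ∀ ω, ∃ nn : ℕ, cost (en nn) ω < f' ω + ENNReal.ofReal ε := by
    intro ω
    have hlt : (⨅ k : K, cost k ω) < f' ω + ENNReal.ofReal ε := by
      have := ENNReal.lt_add_right (hf'top ω) (ENNReal.ofReal_pos.mpr hε).ne'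
      exact this
    obtain ⟨k, hk⟩ := iInf_lt_iff.mp hlt
    obtain ⟨nn, rfl⟩ := hen k
    exact ⟨nn, hk⟩
  set G : Ω → Measure (U × U) := fun ω => G0 (en (Nat.find (hsel ω))) ω with hG_def
  have hGmeas : Measurable G := Measurable.find (fun nn => hG0meas (en nn))
    (fun nn => measurableSet_lt (hcost_meas (en nn)) (hf'meas.add measurable_const)) hsel
  have hGcost : ∀ ω, cost (en (Nat.find (hsel ω))) ω ≤ f' ω + ENNReal.ofReal ε :=
    fun ω => (Nat.find_spec (hsel ω)).le
  have hmarg1 : (P.bind G).map Prod.fst = P.bind q₁ := by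
    ext s hs
    rw [Measure.map_apply measurable_fst hs,
      Measure.bind_apply (measurable_fst hs) hGmeas.aemeasurable, Measure.bind_apply hs hq₁.aemeasurable]
    refine lintegral_congr fun ω => ?_
    rw [← hGfst (en (Nat.find (hsel ω))) ω, Measure.map_apply measurable_fst hs]
  have hmarg2 : (P.bind G).map Prod.snd = P.bind q₂ := by
    ext s hs
    rw [Measure.map_apply measurable_snd hs,
      Measure.bind_apply (measurable_snd hs) hGmeas.aemeasurable, Measure.bind_apply hs hq₂.aemeasurable]
    refine lintegral_congr fun ω => ?_
    rw [← hGsnd (en (Nat.find (hsel ω))) ω, Measure.map_apply measurable_snd hs]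
  calc W2sq c (P.bind q₁) (P.bind q₂) ≤ ∫ z, c z.1 z.2 ∂(P.bind G) :=
        W2sq_le_cost hc0 (P.bind G) hmarg1 hmarg2
    _ = (∫⁻ z, ENNReal.ofReal (c z.1 z.2) ∂(P.bind G)).toReal := hreal _
    _ = (∫⁻ ω, cost (en (Nat.find (hsel ω))) ω ∂P).toReal := by
        rw [Measure.lintegral_bind hGmeas.aemeasurable hcm.ennreal_ofReal.aemeasurable]
    _ ≤ ((∫⁻ ω, f' ω ∂P) + ENNReal.ofReal ε).toReal := by
        apply ENNReal.toReal_mono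
        · exact ENNReal.add_ne_top.mpr ⟨hIntf'top, ENNReal.ofReal_ne_top⟩
        · calc ∫⁻ ω, cost (en (Nat.find (hsel ω))) ω ∂P
              ≤ ∫⁻ ω, (f' ω + ENNReal.ofReal ε) ∂P := lintegral_mono hGcost
            _ = (∫⁻ ω, f' ω ∂P) + ENNReal.ofReal ε := by
                rw [lintegral_add_right _ measurable_const, lintegral_const,
                  measure_univ, mul_one]
    _ = (∫⁻ ω, f' ω ∂P).toReal + ε := by
        rw [ENNReal.toReal_add hIntf'top ENNReal.ofReal_ne_top,
          ENNReal.toReal_ofReal hε.le]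
end
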